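/- arXiv:alg-geom/9702008 — 4 statements merged into one kernel-verified Lean document; each statement's English description precedes it below -/
import Mathlib

section
/- Let A₁, …, A_r be elements of M, let n₁, …, n_r be nonnegative integers, and let δ₁, …, δ_r be nonnegative integers. Assume that for each i either Aᵢ² ≥ 0, or Aᵢ² = −1 and nᵢ ≤ 1, and that Aᵢ·Aⱼ ≥ 0 for all i ≠ j. Then (Σᵢ nᵢAᵢ)² − Σᵢ nᵢAᵢ² + 2·Σᵢ nᵢδᵢ ≥ 0. -/
/-- Under the positivity assumptions on the classes `Aᵢ`
(either `Aᵢ² ≥ 0`, or `Aᵢ² = −1` and `nᵢ ≤ 1`; and `Aᵢ·Aⱼ ≥ 0` for `i ≠ j`),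
the quantity `(Σ nᵢAᵢ)² − Σ nᵢAᵢ² + 2·Σ nᵢδᵢ` is nonnegative. -/
theorem stmt1 {M : Type*} [AddCommGroup M] [Module ℤ M]
    (B : M →ₗ[ℤ] M →ₗ[ℤ] ℤ) (hB : ∀ x y : M, B x y = B y x)
    (r : ℕ) (A : Fin r → M) (n : Fin r → ℕ) (δ : Fin r → ℕ)
    (hsq : ∀ i, 0 ≤ B (A i) (A i) ∨ (B (A i) (A i) = -1 ∧ n i ≤ 1))
    (hij : ∀ i j, i ≠ j → 0 ≤ B (A i) (A j)) :
    0 ≤ B (∑ i, (n i : ℤ) • A i) (∑ i, (n i : ℤ) • A i)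
        - (∑ i, (n i : ℤ) * B (A i) (A i))
        + 2 * ∑ i, (n i : ℤ) * (δ i : ℤ) := by
  have key : B (∑ i, (n i : ℤ) • A i) (∑ i, (n i : ℤ) • A i)
      = ∑ i, ∑ j, (n i : ℤ) * (n j : ℤ) * B (A i) (A j) := by
    rw [map_sum]
    simp [Finset.mul_sum, mul_assoc]
    exact Finset.sum_congr rfl fun i _ => Finset.sum_congr rfl fun j _ => by
      rw [hB (A j) (A i)]
  rw [key, ← Finset.sum_sub_distrib, Finset.mul_sum, ← Finset.sum_add_distrib]
  apply Finset.sum_nonneg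
  intro i _
  rw [← Finset.sum_erase_add _ _ (Finset.mem_univ i)]
  have h1 : 0 ≤ ∑ j ∈ Finset.univ.erase i, (n i : ℤ) * (n j : ℤ) * B (A i) (A j) := by
    apply Finset.sum_nonneg
    intro j hj
    have h := hij i j (Finset.ne_of_mem_erase hj).symm
    positivity
  have h2 : 0 ≤ (n i : ℤ) * (n i : ℤ) * B (A i) (A i) - (n i : ℤ) * B (A i) (A i)
      + 2 * ((n i : ℤ) * (δ i : ℤ)) := by
    have hδ : (0:ℤ) ≤ (δ i : ℤ) := Int.natCast_nonneg _
    have hn0 : (0:ℤ) ≤ (n i : ℤ) := Int.natCast_nonneg _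
    rcases hsq i with h | ⟨h, hn⟩
    · have hnn : 0 ≤ (n i : ℤ) * (n i : ℤ) - (n i : ℤ) := by
        rcases Nat.eq_zero_or_pos (n i) with h0 | h0
        · simp [h0]
        · have : (1:ℤ) ≤ (n i : ℤ) := by exact_mod_cast h0
          nlinarith
      nlinarith [mul_nonneg hnn h, mul_nonneg hn0 hδ]
    · have : (n i : ℤ) = 0 ∨ (n i : ℤ) = 1 := by omega
      rcases this with h0 | h0 <;> rw [h0] <;> nlinarith
  linarith
end

section
/- For every positive integer m and every i ∈ {1, 2, 3}, the number of index-m subgroups of ℤ × ℤ that are contained in Λᵢ equals σ(m/2) if m is even, and equals 0 if m is odd. -/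
/-- `Λ₁ = {(x,y) ∈ ℤ × ℤ : y is even}`. -/
def Lambda1 : AddSubgroup (ℤ × ℤ) where
  carrier := {p : ℤ × ℤ | 2 ∣ p.2}
  zero_mem' := dvd_zero 2
  add_mem' := fun ha hb => dvd_add ha hb
  neg_mem' := fun ha => dvd_neg.mpr ha

/-- `Λ₂ = {(x,y) ∈ ℤ × ℤ : x is even}`. -/
def Lambda2 : AddSubgroup (ℤ × ℤ) where
  carrier := {p : ℤ × ℤ | 2 ∣ p.1}
  zero_mem' := dvd_zero 2
  add_mem' := fun ha hb => dvd_add ha hb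
  neg_mem' := fun ha => dvd_neg.mpr ha

/-- `Λ₃ = {(x,y) ∈ ℤ × ℤ : x ≡ y (mod 2)}`. -/
def Lambda3 : AddSubgroup (ℤ × ℤ) where
  carrier := {p : ℤ × ℤ | p.1 ≡ p.2 [ZMOD 2]}
  zero_mem' := Int.ModEq.refl 0
  add_mem' := fun ha hb => Int.ModEq.add ha hb
  neg_mem' := fun ha => Int.ModEq.neg ha

/-- The hom (l,k) ↦ (a l + b k, d k). -/
def matHom (a b d : ℤ) : ℤ × ℤ →+ ℤ × ℤ :=
  AddMonoidHom.mk' (fun p => (a * p.1 + b * p.2, d * p.2)) (by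
    intro x y; simp [Prod.ext_iff]; constructor <;> ring)

lemma matHom_apply (a b d : ℤ) (p : ℤ × ℤ) :
    matHom a b d p = (a * p.1 + b * p.2, d * p.2) := rfl

lemma matHom_ker (a b d : ℤ) (ha : a ≠ 0) (hd : d ≠ 0) : (matHom a b d).ker = ⊥ := by
  ext p
  simp only [AddMonoidHom.mem_ker, matHom_apply, Prod.ext_iff, AddSubgroup.mem_bot,
    Prod.fst_zero, Prod.snd_zero]
  constructor
  · rintro ⟨h1, h2⟩
    have hk : p.2 = 0 := by
      rcases mul_eq_zero.mp h2 with h | h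
      · exact absurd h hd
      · exact h
    have hl : p.1 = 0 := by
      rw [hk, mul_zero, add_zero] at h1
      rcases mul_eq_zero.mp h1 with h | h
      · exact absurd h ha
      · exact h
    exact ⟨hl, hk⟩
  · rintro ⟨h1, h2⟩; rw [h1, h2]; simp

lemma matHom_inj (a b d : ℤ) (ha : a ≠ 0) (hd : d ≠ 0) :
    Function.Injective (matHom a b d) :=
  (matHom a b d).ker_eq_bot_iff.mp (matHom_ker a b d ha hd)

/-- second-coordinate mod d map -/
def phi2 (d : ℕ) : ℤ × ℤ →+ ZMod d :=
  (Int.castAddHom (ZMod d)).comp (AddMonoidHom.snd ℤ ℤ)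

/-- (x,z) ↦ x - b z mod a -/
def phi1 (a : ℕ) (b : ℤ) : ℤ × ℤ →+ ZMod a :=
  AddMonoidHom.mk' (fun p => (p.1 : ZMod a) - b * p.2) (by
    intro x y
    simp only [Prod.fst_add, Prod.snd_add]
    push_cast
    ring)

lemma phi2_surj (d : ℕ) : Function.Surjective (phi2 d) := by
  intro z
  obtain ⟨y, hy⟩ := ZMod.intCast_surjective (n := d) z
  exact ⟨(0, y), hy⟩

lemma phi1_surj (a : ℕ) (b : ℤ) : Function.Surjective (phi1 a b) := by
  intro z
  obtain ⟨x, hx⟩ := ZMod.intCast_surjective (n := a) z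
  refine ⟨(x, 0), ?_⟩
  show (x : ZMod a) - b * ((0 : ℤ) : ZMod a) = z
  simp [hx]

lemma index_ker_zmod {k : ℕ} (φ : ℤ × ℤ →+ ZMod k) (hs : Function.Surjective φ) :
    φ.ker.index = k := by
  rw [AddSubgroup.index_ker, AddMonoidHom.range_eq_top_of_surjective φ hs,
    Nat.card_congr AddSubgroup.topEquiv.toEquiv, Nat.card_zmod]

lemma range_matHom_d (d : ℕ) : (matHom 1 0 d).range = (phi2 d).ker := by
  ext p
  simp only [AddMonoidHom.mem_range, matHom_apply, AddMonoidHom.mem_ker, Prod.ext_iff]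
  constructor
  · rintro ⟨q, h1, h2⟩
    show ((p.2 : ℤ) : ZMod d) = 0
    rw [ZMod.intCast_zmod_eq_zero_iff_dvd]
    exact ⟨q.2, h2.symm⟩
  · intro h
    have : (d : ℤ) ∣ p.2 := (ZMod.intCast_zmod_eq_zero_iff_dvd _ _).mp h
    obtain ⟨k, hk⟩ := this
    exact ⟨(p.1, k), by simp, hk.symm⟩

lemma range_matHom_ab (a : ℕ) (b : ℤ) : (matHom a b 1).range = (phi1 a b).ker := by
  ext p
  simp only [AddMonoidHom.mem_range, matHom_apply, AddMonoidHom.mem_ker, Prod.ext_iff]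
  constructor
  · rintro ⟨q, h1, h2⟩
    show ((p.1 : ℤ) : ZMod a) - b * p.2 = 0
    have hd : (a : ℤ) ∣ p.1 - b * p.2 := ⟨q.1, by rw [one_mul] at h2; rw [← h1, h2]; ring⟩
    have := (ZMod.intCast_zmod_eq_zero_iff_dvd _ _).mpr hd
    push_cast at this ⊢
    linear_combination this
  · intro h
    have h0 : ((p.1 : ZMod a)) - b * p.2 = 0 := h
    have h' : ((p.1 - b * p.2 : ℤ) : ZMod a) = 0 := by
      push_cast
      linear_combination h0
    have : (a : ℤ) ∣ p.1 - b * p.2 := (ZMod.intCast_zmod_eq_zero_iff_dvd _ _).mp h'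
    obtain ⟨l, hl⟩ := this
    exact ⟨(l, p.2), by linarith, one_mul _⟩

lemma range_comp_eq (a b : ℤ) (d : ℤ) :
    (matHom a b d).range = ((matHom a b 1).range).map (matHom 1 0 d) := by
  ext p
  simp only [AddMonoidHom.mem_range, AddSubgroup.mem_map, matHom_apply, Prod.ext_iff]
  constructor
  · rintro ⟨q, h1, h2⟩
    refine ⟨(a * q.1 + b * q.2, q.2), ⟨q, rfl, one_mul _⟩, by simpa using h1, by simpa using h2⟩
  · rintro ⟨r, ⟨q, hq1, hq2⟩, h1, h2⟩
    rw [one_mul] at hq2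
    refine ⟨q, ?_, ?_⟩
    · rw [← h1, ← hq1]; ring
    · rw [← h2, hq2]
lemma index_range_matHom (a d : ℕ) (b : ℤ) (ha : 0 < a) (hd : 0 < d) :
    (matHom a b d).range.index = a * d := by
  rw [range_comp_eq]
  rw [AddSubgroup.index_map_of_injective _ (matHom_inj 1 0 d one_ne_zero (by exact_mod_cast hd.ne'))]
  rw [range_matHom_ab, range_matHom_d, index_ker_zmod _ (phi1_surj a b),
    index_ker_zmod _ (phi2_surj d)]

lemma range_matHom_mod (a d : ℕ) (b : ℤ) :
    (matHom (a : ℤ) (b % a) d).range = (matHom a b d).range := by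
  have hmod : (b % a : ℤ) = b - a * (b / a) := by rw [Int.emod_def]
  ext p
  simp only [AddMonoidHom.mem_range, matHom_apply, Prod.ext_iff]
  constructor
  · rintro ⟨q, h1, h2⟩
    exact ⟨(q.1 - (b / a) * q.2, q.2), by rw [← h1, hmod]; ring, h2⟩
  · rintro ⟨q, h1, h2⟩
    exact ⟨(q.1 + (b / a) * q.2, q.2), by rw [← h1, hmod]; ring, h2⟩

lemma quotient_finite {H : AddSubgroup (ℤ × ℤ)} {n : ℕ} (hn : 0 < n) (hH : H.index = n) :
    Finite ((ℤ × ℤ) ⧸ H) := by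
  have h0 : Nat.card ((ℤ × ℤ) ⧸ H) ≠ 0 := by
    show H.index ≠ 0
    omega
  exact (Nat.card_ne_zero.mp h0).2

lemma zsmul_pair (k : ℤ) (r : ℤ × ℤ) : k • r = (k * r.1, k * r.2) := by
  ext <;> simp

lemma exists_hnf (H : AddSubgroup (ℤ × ℤ)) (n : ℕ) (hn : 0 < n) (hH : H.index = n) :
    ∃ a d : ℕ, 0 < a ∧ 0 < d ∧ a * d = n ∧
      ∃ b : ℕ, b < a ∧ H = (matHom a b d).range := by
  have hfin : Finite ((ℤ × ℤ) ⧸ H) := quotient_finite hn hH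
  -- the subgroup of x with (x,0) ∈ H
  set A : AddSubgroup ℤ := H.comap (AddMonoidHom.inl ℤ ℤ) with hA
  obtain ⟨a₀, ha₀⟩ := Int.subgroup_cyclic A
  have memA : ∀ x : ℤ, x ∈ A ↔ a₀ ∣ x := by
    intro x
    rw [ha₀, AddSubgroup.mem_closure_singleton]
    constructor
    · rintro ⟨k, hk⟩; exact ⟨k, by rw [← hk, smul_eq_mul, mul_comm]⟩
    · rintro ⟨k, hk⟩; exact ⟨k, by rw [smul_eq_mul, hk, mul_comm]⟩
  have ha₀ne : a₀ ≠ 0 := by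
    rintro rfl
    have hinj : Function.Injective (fun k : ℤ => ((k, (0:ℤ)) : (ℤ × ℤ) ⧸ H)) := by
      intro k k' h
      have h2 := (QuotientAddGroup.eq (s := H)).mp h
      have h3 : (-k + k' : ℤ) ∈ A := by
        have h4 : (-(k,(0:ℤ)) + (k',0)) ∈ H := h2
        simpa [hA, AddSubgroup.mem_comap] using h4
      rw [memA] at h3
      simp at h3
      omega
    exact (not_finite_iff_infinite.mpr (Infinite.of_injective _ hinj)) hfin
  -- the projection to the second coordinate
  set P : AddSubgroup ℤ := H.map (AddMonoidHom.snd ℤ ℤ) with hP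
  obtain ⟨d₀, hd₀⟩ := Int.subgroup_cyclic P
  have memP : ∀ y : ℤ, y ∈ P ↔ d₀ ∣ y := by
    intro y
    rw [hd₀, AddSubgroup.mem_closure_singleton]
    constructor
    · rintro ⟨k, hk⟩; exact ⟨k, by rw [← hk, smul_eq_mul, mul_comm]⟩
    · rintro ⟨k, hk⟩; exact ⟨k, by rw [smul_eq_mul, hk, mul_comm]⟩
  have hd₀ne : d₀ ≠ 0 := by
    rintro rfl
    have hysnd : ∀ p : ℤ × ℤ, p ∈ H → p.2 = 0 := by
      intro p hp
      have hm : p.2 ∈ P := ⟨p, hp, rfl⟩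
      rw [memP] at hm
      simpa using hm
    have hinj : Function.Injective (fun k : ℤ => (((0:ℤ), k) : (ℤ × ℤ) ⧸ H)) := by
      intro k k' h
      have h2 := (QuotientAddGroup.eq (s := H)).mp h
      have h3 := hysnd _ h2
      simp at h3
      omega
    exact (not_finite_iff_infinite.mpr (Infinite.of_injective _ hinj)) hfin
  set a : ℕ := a₀.natAbs with haa
  set d : ℕ := d₀.natAbs with hdd
  have hapos : 0 < a := Int.natAbs_pos.mpr ha₀ne
  have hdpos : 0 < d := Int.natAbs_pos.mpr hd₀ne
  have hamem : ((a : ℤ), (0:ℤ)) ∈ H := by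
    have hm : (a : ℤ) ∈ A := (memA _).mpr (Int.dvd_natAbs.mpr dvd_rfl)
    simpa [hA, AddSubgroup.mem_comap] using hm
  have hdmemP : (d : ℤ) ∈ P := by
    rw [memP]
    exact Int.dvd_natAbs.mpr dvd_rfl
  obtain ⟨q, hqH, hq2⟩ := hdmemP
  have hq2' : q.2 = (d : ℤ) := hq2
  -- q = (b', d) ∈ H
  have key : H = (matHom a q.1 d).range := by
    ext p
    simp only [AddMonoidHom.mem_range, matHom_apply, Prod.ext_iff]
    constructor
    · intro hp
      have hyP : p.2 ∈ P := ⟨p, hp, rfl⟩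
      rw [memP] at hyP
      have hdvd : (d : ℤ) ∣ p.2 := (Int.natAbs_dvd).mpr hyP
      obtain ⟨k, hk⟩ := hdvd
      have hsub : (p.1 - k * q.1, (0:ℤ)) ∈ H := by
        have hq' : (k • q) ∈ H := zsmul_mem hqH k
        have hs := H.sub_mem hp hq'
        have heq : p - k • q = (p.1 - k * q.1, 0) := by
          rw [zsmul_pair]
          ext
          · simp
          · simp only [Prod.snd_sub]
            rw [hq2', hk]
            ring
        rwa [heq] at hs
      have hmA : p.1 - k * q.1 ∈ A := by simpa [hA, AddSubgroup.mem_comap] using hsub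
      rw [memA] at hmA
      have hdvd2 : (a : ℤ) ∣ p.1 - k * q.1 := (Int.natAbs_dvd).mpr hmA
      obtain ⟨l, hl⟩ := hdvd2
      exact ⟨(l, k), by linear_combination -hl, by linear_combination -hk⟩
    · rintro ⟨r, h1, h2⟩
      have hmem : ((a : ℤ) * r.1 + q.1 * r.2, (d : ℤ) * r.2) ∈ H := by
        have h1' : (r.1 • ((a:ℤ), (0:ℤ))) ∈ H := zsmul_mem hamem r.1
        have h2' : (r.2 • q) ∈ H := zsmul_mem hqH r.2
        have hs := H.add_mem h1' h2'
        have heq : r.1 • ((a:ℤ), (0:ℤ)) + r.2 • q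
            = ((a : ℤ) * r.1 + q.1 * r.2, (d : ℤ) * r.2) := by
          rw [zsmul_pair, zsmul_pair]
          ext
          · simp; ring
          · simp [hq2']; ring
        rwa [heq] at hs
      have hpe : p = ((a : ℤ) * r.1 + q.1 * r.2, (d : ℤ) * r.2) :=
        Prod.ext (by linear_combination -h1) (by linear_combination -h2)
      rwa [hpe]
  have hidx : a * d = n := by
    rw [key, index_range_matHom a d q.1 hapos hdpos] at hH
    exact hH
  have h1 := Int.emod_nonneg q.1 (by exact_mod_cast hapos.ne' : (a:ℤ) ≠ 0)
  have h2 := Int.emod_lt_of_pos q.1 (by exact_mod_cast hapos : (0:ℤ) < a)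
  refine ⟨a, d, hapos, hdpos, hidx, (q.1 % a).toNat, by omega, ?_⟩
  rw [key, ← range_matHom_mod a d q.1, Int.toNat_of_nonneg h1]

lemma pair_mem_range (a b d : ℕ) :
    ((b : ℤ), (d : ℤ)) ∈ (matHom a b d).range := by
  refine ⟨(0, 1), ?_⟩
  simp [matHom_apply, Prod.ext_iff]

lemma count_subgroups (n : ℕ) (hn : 0 < n) :
    Set.ncard {Λ : AddSubgroup (ℤ × ℤ) | Λ.index = n} = ∑ a ∈ n.divisors, a := by
  classical
  set T : Finset ((_ : ℕ) × ℕ) := n.divisors.sigma (fun a => Finset.range a) with hT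
  set F : (Σ _ : ℕ, ℕ) → AddSubgroup (ℤ × ℤ) :=
    fun p => (matHom p.1 p.2 (((n / p.1 : ℕ)) : ℤ)).range with hF
  have hTmem : ∀ p : (Σ _ : ℕ, ℕ), p ∈ T →
      0 < p.1 ∧ 0 < n / p.1 ∧ p.1 * (n / p.1) = n ∧ p.2 < p.1 := by
    rintro ⟨a, b⟩ hp
    simp only [hT, Finset.mem_sigma, Nat.mem_divisors, Finset.mem_range] at hp
    obtain ⟨⟨hdvd, _⟩, hb⟩ := hp
    have hapos : 0 < a := Nat.pos_of_dvd_of_pos hdvd hn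
    have hdpos : 0 < n / a := Nat.div_pos (Nat.le_of_dvd hn hdvd) hapos
    exact ⟨hapos, hdpos, Nat.mul_div_cancel' hdvd, hb⟩
  have hinj : Set.InjOn F ↑T := by
    rintro ⟨a, b⟩ ha' ⟨a', b'⟩ hb' heq
    obtain ⟨hapos, hdpos, had, hba⟩ := hTmem _ (by exact_mod_cast ha')
    obtain ⟨ha'pos, hd'pos, ha'd, hb'a⟩ := hTmem _ (by exact_mod_cast hb')
    set d := n / a with hd
    set d' := n / a' with hd'
    have hm1 : ((b' : ℤ), (d' : ℤ)) ∈ (matHom a b d).range := by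
      have := pair_mem_range a' b' d'
      rw [show (matHom (a':ℤ) (b':ℤ) (d':ℤ)).range = F ⟨a', b'⟩ from rfl, ← heq] at this
      exact this
    have hm2 : ((b : ℤ), (d : ℤ)) ∈ (matHom a' b' d').range := by
      have := pair_mem_range a b d
      rw [show (matHom (a:ℤ) (b:ℤ) (d:ℤ)).range = F ⟨a, b⟩ from rfl, heq] at this
      exact this
    obtain ⟨r, hr⟩ := hm1
    obtain ⟨s, hs⟩ := hm2
    rw [matHom_apply, Prod.mk.injEq] at hr hs
    obtain ⟨hr1, hr2⟩ := hr
    obtain ⟨hs1, hs2⟩ := hs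
    -- d ∣ d' and d' ∣ d
    have hdd' : d = d' := by
      have h1 : (d : ℤ) ∣ (d' : ℤ) := ⟨r.2, hr2.symm⟩
      have h2 : (d' : ℤ) ∣ (d : ℤ) := ⟨s.2, hs2.symm⟩
      exact Nat.dvd_antisymm (by exact_mod_cast h1) (by exact_mod_cast h2)
    have haa' : a = a' := by
      have e1 : a * d = n := had
      have e2 : a' * d' = n := ha'd
      rw [← hdd'] at e2
      have : 0 < d := hdpos
      exact Nat.eq_of_mul_eq_mul_right this (by rw [e1, e2])
    subst haa'
    rw [← hdd'] at hr2
    have hk1 : r.2 = 1 := by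
      have hd0 : (d : ℤ) ≠ 0 := by exact_mod_cast hdpos.ne'
      exact mul_left_cancel₀ hd0 (by rw [hr2, mul_one])
    rw [hk1, mul_one] at hr1
    -- now (b' : ℤ) = a * r.1 + b with 0 ≤ b, b' < a
    have c1 : (b : ℤ) < a := by exact_mod_cast hba
    have c3 : (b' : ℤ) < a := by exact_mod_cast hb'a
    have c2 : (0 : ℤ) ≤ b := Int.natCast_nonneg b
    have c4 : (0 : ℤ) ≤ b' := Int.natCast_nonneg b'
    have hl0 : r.1 = 0 := by
      by_contra hl
      rcases lt_or_gt_of_ne hl with h | h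
      · have hm := mul_le_mul_of_nonneg_left (show r.1 ≤ -1 by omega)
          (show (0:ℤ) ≤ a by positivity)
        linarith
      · have hm := mul_le_mul_of_nonneg_left (show (1:ℤ) ≤ r.1 by omega)
          (show (0:ℤ) ≤ a by positivity)
        linarith
    rw [hl0, mul_zero, zero_add] at hr1
    have hbb : b' = b := by exact_mod_cast hr1.symm
    rw [hbb]
  have hset : {Λ : AddSubgroup (ℤ × ℤ) | Λ.index = n} = ↑(T.image F) := by
    ext Λ
    simp only [Set.mem_setOf_eq, Finset.coe_image, Set.mem_image, Finset.mem_coe]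
    constructor
    · intro hΛ
      obtain ⟨a, d, ha, hd, had, b, hb, hH⟩ := exists_hnf Λ n hn hΛ
      have hda : n / a = d := by rw [← had, Nat.mul_div_cancel_left _ ha]
      refine ⟨⟨a, b⟩, ?_, ?_⟩
      · simp only [hT, Finset.mem_sigma, Nat.mem_divisors, Finset.mem_range]
        exact ⟨⟨⟨d, had.symm⟩, hn.ne'⟩, hb⟩
      · show (matHom (a : ℤ) (b : ℤ) (((n / a : ℕ)) : ℤ)).range = Λ
        rw [hda, ← hH]
    · rintro ⟨⟨a, b⟩, hmem, rfl⟩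
      obtain ⟨hapos, hdpos, had, hba⟩ := hTmem _ hmem
      show (matHom (a : ℤ) (b : ℤ) (((n / a : ℕ)) : ℤ)).range.index = n
      rw [index_range_matHom a (n / a) b hapos hdpos]
      exact had
  rw [hset, Set.ncard_coe_finset, Finset.card_image_of_injOn hinj, hT, Finset.card_sigma]
  simp

lemma main_aux (m : ℕ) (hm : 0 < m) (a d : ℕ) (b : ℤ) (ha : 0 < a) (hd : 0 < d)
    (had : a * d = 2) (N : AddSubgroup (ℤ × ℤ)) (hNr : (matHom a b d).range = N) :
    Set.ncard {Λ : AddSubgroup (ℤ × ℤ) | Λ.index = m ∧ Λ ≤ N}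
      = if 2 ∣ m then ∑ a ∈ (m / 2).divisors, a else 0 := by
  have haz : (a : ℤ) ≠ 0 := by exact_mod_cast ha.ne'
  have hdz : (d : ℤ) ≠ 0 := by exact_mod_cast hd.ne'
  set f := matHom a b d with hf
  have hinjf : Function.Injective f := matHom_inj a b d haz hdz
  have hridx : f.range.index = 2 := by rw [hf, index_range_matHom a d b ha hd, had]
  by_cases h2 : 2 ∣ m
  · rw [if_pos h2]
    have himg : {Λ : AddSubgroup (ℤ × ℤ) | Λ.index = m ∧ Λ ≤ N}
        = (AddSubgroup.map f) '' {Λ : AddSubgroup (ℤ × ℤ) | Λ.index = m / 2} := by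
      ext Λ
      simp only [Set.mem_setOf_eq, Set.mem_image]
      constructor
      · rintro ⟨hidx, hle⟩
        refine ⟨Λ.comap f, ?_, ?_⟩
        · have hmc : AddSubgroup.map f (Λ.comap f) = Λ := by
            rw [AddSubgroup.map_comap_eq, hNr]
            exact inf_eq_right.mpr hle
          have := AddSubgroup.index_map_of_injective (Λ.comap f) hinjf
          rw [hmc, hidx, hridx] at this
          omega
        · rw [AddSubgroup.map_comap_eq, hNr]
          exact inf_eq_right.mpr hle
      · rintro ⟨Λ', hidx, rfl⟩
        constructor
        · rw [AddSubgroup.index_map_of_injective Λ' hinjf, hidx, hridx]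
          omega
        · rw [← hNr]
          rw [AddMonoidHom.range_eq_map]
          exact AddSubgroup.map_mono le_top
    rw [himg, Set.ncard_image_of_injective _ (AddSubgroup.map_injective hinjf)]
    exact count_subgroups (m / 2) (by omega)
  · rw [if_neg h2]
    have hempty : {Λ : AddSubgroup (ℤ × ℤ) | Λ.index = m ∧ Λ ≤ N} = ∅ := by
      ext Λ
      simp only [Set.mem_setOf_eq, Set.mem_empty_iff_false, iff_false, not_and]
      intro hidx hle
      have hdvd : N.index ∣ Λ.index := AddSubgroup.index_dvd_of_le hle
      rw [← hNr, hridx, hidx] at hdvd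
      exact h2 hdvd
    rw [hempty, Set.ncard_empty]

lemma mem_L1 (p : ℤ × ℤ) : p ∈ Lambda1 ↔ 2 ∣ p.2 := Iff.rfl
lemma mem_L2 (p : ℤ × ℤ) : p ∈ Lambda2 ↔ 2 ∣ p.1 := Iff.rfl
lemma mem_L3 (p : ℤ × ℤ) : p ∈ Lambda3 ↔ p.1 % 2 = p.2 % 2 := Iff.rfl

lemma range_L1 : (matHom 1 0 2).range = Lambda1 := by
  ext p
  rw [mem_L1]
  constructor
  · rintro ⟨q, hq⟩
    rw [matHom_apply, Prod.ext_iff] at hq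
    exact ⟨q.2, by omega⟩
  · rintro ⟨k, hk⟩
    refine ⟨(p.1, k), ?_⟩
    rw [matHom_apply]
    exact Prod.ext (by omega) (by omega)

lemma range_L2 : (matHom 2 0 1).range = Lambda2 := by
  ext p
  rw [mem_L2]
  constructor
  · rintro ⟨q, hq⟩
    rw [matHom_apply, Prod.ext_iff] at hq
    exact ⟨q.1, by omega⟩
  · rintro ⟨k, hk⟩
    refine ⟨(k, p.2), ?_⟩
    rw [matHom_apply]
    exact Prod.ext (by omega) (by omega)

lemma range_L3 : (matHom 2 1 1).range = Lambda3 := by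
  ext p
  rw [mem_L3]
  constructor
  · rintro ⟨q, hq⟩
    rw [matHom_apply, Prod.ext_iff] at hq
    omega
  · intro hp
    refine ⟨((p.1 - p.2) / 2, p.2), ?_⟩
    rw [matHom_apply]
    exact Prod.ext (by omega) (by omega)

/-- For every positive integer `m` and each of the three index-2
subgroups `Λᵢ`, the number of index-`m` subgroups of `ℤ × ℤ` contained in `Λᵢ`
equals `σ(m/2)` if `m` is even, and `0` if `m` is odd. -/
theorem stmt5 (m : ℕ) (hm : 0 < m)
    (N : AddSubgroup (ℤ × ℤ)) (hN : N ∈ ({Lambda1, Lambda2, Lambda3} : Set (AddSubgroup (ℤ × ℤ)))) :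
    Set.ncard {Λ : AddSubgroup (ℤ × ℤ) | Λ.index = m ∧ Λ ≤ N}
      = if 2 ∣ m then ∑ a ∈ (m / 2).divisors, a else 0 := by
  simp only [Set.mem_insert_iff, Set.mem_singleton_iff] at hN
  rcases hN with rfl | rfl | rfl
  · exact main_aux m hm 1 2 0 one_pos two_pos rfl _ range_L1
  · exact main_aux m hm 2 1 0 two_pos one_pos rfl _ range_L2
  · exact main_aux m hm 2 1 1 two_pos one_pos rfl _ range_L3
end

section
/- For every positive integer m and every i ∈ {1, 2, 3}, the number of index-m subgroups of ℤ × ℤ that are contained in Λᵢ but not contained in Λⱼ for either j ≠ i equals σ(m/2) − σ(m/4) (with σ(m/2) = 0 if m is odd and σ(m/4) = 0 if 4 does not divide m). -/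
open AddSubgroup Finset



/-- The three index-2 subgroups, indexed by `Fin 3`. -/
def L : Fin 3 → AddSubgroup (ℤ × ℤ) := ![Lambda1, Lambda2, Lambda3]

/-- The lattice with Hermite normal form basis `(a,0), (c,d)`. -/
def lat (a c d : ℤ) : AddSubgroup (ℤ × ℤ) where
  carrier := {p | d ∣ p.2 ∧ a * d ∣ p.1 * d - c * p.2}
  zero_mem' := ⟨dvd_zero _, by simp⟩
  add_mem' := by
    rintro p q ⟨h1, h2⟩ ⟨g1, g2⟩
    refine ⟨dvd_add h1 g1, ?_⟩
    have e : (p + q).1 * d - c * (p + q).2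
        = (p.1 * d - c * p.2) + (q.1 * d - c * q.2) := by
      rw [Prod.fst_add, Prod.snd_add]; ring
    rw [e]; exact dvd_add h2 g2
  neg_mem' := by
    rintro p ⟨h1, h2⟩
    refine ⟨dvd_neg.2 h1, ?_⟩
    have e : (-p).1 * d - c * (-p).2 = -(p.1 * d - c * p.2) := by
      rw [Prod.fst_neg, Prod.snd_neg]; ring
    rw [e]; exact h2.neg_right

lemma mem_lat {a c d x y : ℤ} : (x, y) ∈ lat a c d ↔ d ∣ y ∧ a * d ∣ x * d - c * y :=
  Iff.rfl

lemma gen1_mem_lat (a c d : ℤ) : (a, 0) ∈ lat a c d := by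
  refine ⟨dvd_zero _, ?_⟩; simp

lemma gen2_mem_lat (a c d : ℤ) : (c, d) ∈ lat a c d := by
  refine ⟨dvd_refl _, ?_⟩; simp

lemma lat_eq_closure (a c d : ℤ) (hd : d ≠ 0) :
    lat a c d = AddSubgroup.closure {(a, 0), (c, d)} := by
  apply le_antisymm
  · rintro ⟨x, y⟩ ⟨h1, h2⟩
    obtain ⟨k, rfl⟩ := h1
    have h3 : a ∣ x - c * k := by
      rcases h2 with ⟨t, ht⟩
      refine ⟨t, ?_⟩
      simp only at ht
      have h4 : (x - c * k) * d = a * t * d := by linear_combination ht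
      exact mul_right_cancel₀ hd h4
    obtain ⟨l, hl⟩ := h3
    have e : ((x, d * k) : ℤ × ℤ) = l • ((a : ℤ), (0 : ℤ)) + k • ((c : ℤ), (d : ℤ)) := by
      have hx : x = c * k + a * l := by linarith
      simp [Prod.ext_iff, hx]; constructor <;> ring
    rw [e]
    exact add_mem (zsmul_mem (subset_closure (by simp)) l)
      (zsmul_mem (subset_closure (by simp)) k)
  · rw [closure_le]
    rintro p (rfl | rfl)
    · exact gen1_mem_lat a c d
    · exact gen2_mem_lat a c d

lemma lat_le_iff {a c d : ℤ} (hd : d ≠ 0) {H : AddSubgroup (ℤ × ℤ)} :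
    lat a c d ≤ H ↔ (a, 0) ∈ H ∧ (c, d) ∈ H := by
  rw [lat_eq_closure a c d hd, closure_le]
  constructor
  · intro h; exact ⟨h (by simp), h (by simp)⟩
  · rintro ⟨h1, h2⟩ p (rfl | rfl) <;> assumption

lemma index_lat (a c d : ℤ) (hd : d ≠ 0) : (lat a c d).index = (a * d).natAbs := by
  set φ : ℤ × ℤ →+ ℤ × ℤ := AddMonoidHom.mk' (fun p => (p.1 + c * p.2, d * p.2))
    (by intro p q; simp [Prod.ext_iff]; constructor <;> ring) with hφ
  have hrange : φ.range = (zmultiples d).comap (AddMonoidHom.snd ℤ ℤ) := by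
    ext ⟨u, v⟩
    simp only [AddMonoidHom.mem_range, AddSubgroup.mem_comap, AddMonoidHom.coe_snd,
      Int.mem_zmultiples_iff, hφ, AddMonoidHom.mk'_apply, Prod.mk.injEq, Prod.exists]
    constructor
    · rintro ⟨x, y, _, rfl⟩; exact ⟨y, rfl⟩
    · rintro ⟨k, rfl⟩; exact ⟨u - c * k, k, by ring, rfl⟩
  have hcomap : (lat a c d).comap φ = (zmultiples a).comap (AddMonoidHom.fst ℤ ℤ) := by
    ext ⟨x, y⟩
    simp only [AddSubgroup.mem_comap, hφ, AddMonoidHom.mk'_apply, mem_lat,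
      AddMonoidHom.coe_fst, Int.mem_zmultiples_iff]
    constructor
    · rintro ⟨-, h2⟩
      have h3 : a * d ∣ x * d := by
        have e : (x + c * y) * d - c * (d * y) = x * d := by ring
        rwa [e] at h2
      exact (mul_dvd_mul_iff_right hd).1 h3
    · intro h
      refine ⟨Dvd.intro y rfl, ?_⟩
      have e : (x + c * y) * d - c * (d * y) = x * d := by ring
      rw [e]
      exact mul_dvd_mul_right h d
  have hK : lat a c d ≤ (zmultiples d).comap (AddMonoidHom.snd ℤ ℤ) := by
    rintro ⟨x, y⟩ ⟨h1, -⟩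
    simpa [Int.mem_zmultiples_iff] using h1
  have hsnd : Function.Surjective (AddMonoidHom.snd ℤ ℤ) := fun x => ⟨(0, x), rfl⟩
  have hfst : Function.Surjective (AddMonoidHom.fst ℤ ℤ) := fun x => ⟨(x, 0), rfl⟩
  have hrel := AddSubgroup.relIndex_comap (H := lat a c d) φ ⊤
  rw [relIndex_top_right, hcomap,
    AddSubgroup.index_comap_of_surjective _ hfst, Int.index_zmultiples,
    ← AddMonoidHom.range_eq_map, hrange] at hrel
  have hmul := AddSubgroup.relIndex_mul_index hK
  rw [← hrel, AddSubgroup.index_comap_of_surjective _ hsnd, Int.index_zmultiples] at hmul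
  rw [← hmul, Int.natAbs_mul]

lemma index_eq_zero_of_inj (Λ : AddSubgroup (ℤ × ℤ)) (v : ℤ × ℤ)
    (hv : ∀ n : ℤ, n • v ∈ Λ → n = 0) : Λ.index = 0 := by
  have hinj : Function.Injective (fun n : ℤ => (QuotientAddGroup.mk (n • v) : (ℤ × ℤ) ⧸ Λ)) := by
    intro n m h
    rw [QuotientAddGroup.eq] at h
    have : (m - n) • v ∈ Λ := by
      have e : -(n • v) + m • v = (m - n) • v := by rw [sub_smul]; abel
      rwa [e] at h
    have := hv _ this
    omega
  have : Infinite ((ℤ × ℤ) ⧸ Λ) := Infinite.of_injective _ hinj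
  exact Nat.card_eq_zero_of_infinite

lemma exists_lat (Λ : AddSubgroup (ℤ × ℤ)) (h : Λ.index ≠ 0) :
    ∃ a c d : ℤ, 0 < a ∧ 0 < d ∧ 0 ≤ c ∧ c < a ∧ Λ = lat a c d := by
  obtain ⟨d₀, hd₀⟩ := Int.subgroup_cyclic (Λ.map (AddMonoidHom.snd ℤ ℤ))
  obtain ⟨a₀, ha₀⟩ := Int.subgroup_cyclic (Λ.comap (AddMonoidHom.inl ℤ ℤ))
  have hmem2 : ∀ y : ℤ, (∃ x, (x, y) ∈ Λ) ↔ d₀ ∣ y := by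
    intro y
    constructor
    · intro ⟨x, hx⟩
      have : y ∈ Λ.map (AddMonoidHom.snd ℤ ℤ) := ⟨(x, y), hx, rfl⟩
      rw [hd₀, AddSubgroup.mem_closure_singleton] at this
      obtain ⟨n, hn⟩ := this
      exact ⟨n, by rw [← hn]; push_cast [zsmul_eq_mul]; ring⟩
    · rintro ⟨n, rfl⟩
      have : d₀ ∈ Λ.map (AddMonoidHom.snd ℤ ℤ) := by
        rw [hd₀]; exact AddSubgroup.mem_closure_singleton.2 ⟨1, one_zsmul d₀⟩
      obtain ⟨⟨x, y⟩, hxy, hy⟩ := this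
      simp only [AddMonoidHom.coe_snd] at hy
      subst hy
      refine ⟨n * x, ?_⟩
      have : n • ((x, y) : ℤ × ℤ) ∈ Λ := zsmul_mem hxy n
      simpa [Prod.smul_def, zsmul_eq_mul, mul_comm] using this
  have hmem1 : ∀ x : ℤ, (x, (0:ℤ)) ∈ Λ ↔ a₀ ∣ x := by
    intro x
    constructor
    · intro hx
      have : x ∈ Λ.comap (AddMonoidHom.inl ℤ ℤ) := hx
      rw [ha₀, AddSubgroup.mem_closure_singleton] at this
      obtain ⟨n, hn⟩ := this
      exact ⟨n, by rw [← hn]; push_cast [zsmul_eq_mul]; ring⟩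
    · rintro ⟨n, rfl⟩
      have h1 : a₀ ∈ Λ.comap (AddMonoidHom.inl ℤ ℤ) := by
        rw [ha₀]; exact AddSubgroup.mem_closure_singleton.2 ⟨1, one_zsmul a₀⟩
      have h1' : ((a₀, (0:ℤ)) : ℤ × ℤ) ∈ Λ := h1
      have : n • ((a₀, (0:ℤ)) : ℤ × ℤ) ∈ Λ := zsmul_mem h1' n
      simpa [Prod.smul_def, zsmul_eq_mul, mul_comm] using this
  have hd0 : d₀ ≠ 0 := by
    rintro rfl
    refine h (index_eq_zero_of_inj Λ (0, 1) ?_)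
    intro n hn
    have : ∃ x, (x, n) ∈ Λ := ⟨0, by simpa [Prod.smul_def] using hn⟩
    simpa using (hmem2 n).1 this
  have ha0 : a₀ ≠ 0 := by
    rintro rfl
    refine h (index_eq_zero_of_inj Λ (1, 0) ?_)
    intro n hn
    have : (n, (0:ℤ)) ∈ Λ := by simpa [Prod.smul_def] using hn
    simpa using (hmem1 n).1 this
  set a := |a₀| with ha
  set d := |d₀| with hd
  have hmem2' : ∀ y : ℤ, (∃ x, (x, y) ∈ Λ) ↔ d ∣ y := by
    intro y; rw [hmem2, hd, abs_dvd]
  have hmem1' : ∀ x : ℤ, (x, (0:ℤ)) ∈ Λ ↔ a ∣ x := by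
    intro x; rw [hmem1, ha, abs_dvd]
  have hapos : 0 < a := abs_pos.2 ha0
  have hdpos : 0 < d := abs_pos.2 hd0
  obtain ⟨c₀, hc₀⟩ := (hmem2' d).2 dvd_rfl
  set c := c₀ % a with hc
  have hcd : ((c, d) : ℤ × ℤ) ∈ Λ := by
    have hA : ((a, 0) : ℤ × ℤ) ∈ Λ := (hmem1' a).2 dvd_rfl
    have : ((c₀, d) : ℤ × ℤ) - (c₀ / a) • ((a, 0) : ℤ × ℤ) ∈ Λ :=
      sub_mem hc₀ (zsmul_mem hA _)
    have e : ((c₀, d) : ℤ × ℤ) - (c₀ / a) • ((a, 0) : ℤ × ℤ) = (c, d) := by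
      simp [Prod.ext_iff, Prod.smul_def, hc, Int.emod_def]; ring
    rwa [e] at this
  refine ⟨a, c, d, hapos, hdpos, Int.emod_nonneg c₀ (ne_of_gt hapos) , Int.emod_lt_of_pos c₀ hapos, ?_⟩
  apply le_antisymm
  · rintro ⟨x, y⟩ hxy
    obtain ⟨k, rfl⟩ := (hmem2' y).1 ⟨x, hxy⟩
    have h5 : ((x, d * k) : ℤ × ℤ) - k • ((c, d) : ℤ × ℤ) ∈ Λ := sub_mem hxy (zsmul_mem hcd k)
    have e : ((x, d * k) : ℤ × ℤ) - k • ((c, d) : ℤ × ℤ) = (x - k * c, 0) := by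
      simp [Prod.ext_iff, Prod.smul_def]; ring
    rw [e] at h5
    have h6 : a ∣ x - k * c := (hmem1' _).1 h5
    rw [mem_lat]
    refine ⟨⟨k, rfl⟩, ?_⟩
    have e2 : x * d - c * (d * k) = (x - k * c) * d := by ring
    rw [e2]
    exact mul_dvd_mul_right h6 d
  · rw [lat_le_iff (ne_of_gt hdpos)]
    exact ⟨(hmem1' a).2 dvd_rfl, hcd⟩

lemma lat_inj {a c d a' c' d' : ℤ} (ha : 0 < a) (hd : 0 < d) (hc1 : 0 ≤ c) (hc2 : c < a)
    (ha' : 0 < a') (hd' : 0 < d') (hc1' : 0 ≤ c') (hc2' : c' < a')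
    (h : lat a c d = lat a' c' d') : a = a' ∧ c = c' ∧ d = d' := by
  have h1 : ((c', d') : ℤ × ℤ) ∈ lat a c d := h ▸ gen2_mem_lat a' c' d'
  have h2 : ((c, d) : ℤ × ℤ) ∈ lat a' c' d' := h.symm ▸ gen2_mem_lat a c d
  have hdd' : d ∣ d' := (mem_lat.1 h1).1
  have hd'd : d' ∣ d := (mem_lat.1 h2).1
  have hdeq : d = d' := Int.dvd_antisymm (le_of_lt hd) (le_of_lt hd') hdd' hd'd
  subst hdeq
  have h3 : ((a', 0) : ℤ × ℤ) ∈ lat a c d := h ▸ gen1_mem_lat a' c' d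
  have h4 : ((a, 0) : ℤ × ℤ) ∈ lat a' c' d := h.symm ▸ gen1_mem_lat a c d
  have haa' : a ∣ a' := by
    have := (mem_lat.1 h3).2
    simp only [mul_zero, sub_zero] at this
    exact (mul_dvd_mul_iff_right (ne_of_gt hd)).1 this
  have ha'a : a' ∣ a := by
    have := (mem_lat.1 h4).2
    simp only [mul_zero, sub_zero] at this
    exact (mul_dvd_mul_iff_right (ne_of_gt hd)).1 this
  have haeq : a = a' := Int.dvd_antisymm (le_of_lt ha) (le_of_lt ha') haa' ha'a
  subst haeq
  refine ⟨rfl, ?_, rfl⟩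
  have h5 : a * d ∣ c' * d - c * d := (mem_lat.1 h1).2
  have h6 : a ∣ c' - c := by
    have e : c' * d - c * d = (c' - c) * d := by ring
    rw [e] at h5
    exact (mul_dvd_mul_iff_right (ne_of_gt hd)).1 h5
  have h7 : c' - c = 0 := Int.eq_zero_of_abs_lt_dvd h6 (by rw [abs_lt]; omega)
  omega

lemma master (m : ℕ) (hm : 0 < m) (Q : AddSubgroup (ℤ × ℤ) → Prop)
    (p : ℕ × ℕ → ℕ → Prop) [∀ ad, DecidablePred (p ad)]
    (hQ : ∀ a c d : ℕ, a * d = m → c < a → 0 < d → (Q (lat a c d) ↔ p (a, d) c)) :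
    {Λ : AddSubgroup (ℤ × ℤ) | Λ.index = m ∧ Q Λ}.ncard
      = (m.divisorsAntidiagonal.sigma fun ad => (range ad.1).filter (p ad)).card := by
  set F := m.divisorsAntidiagonal.sigma fun ad => (range ad.1).filter (p ad) with hF
  set G : (Σ _ : ℕ × ℕ, ℕ) → AddSubgroup (ℤ × ℤ) :=
    fun x => lat (x.1.1 : ℤ) (x.2 : ℤ) (x.1.2 : ℤ) with hG
  have hmemF : ∀ x : Σ _ : ℕ × ℕ, ℕ,
      x ∈ F ↔ (x.1.1 * x.1.2 = m ∧ x.2 < x.1.1 ∧ p x.1 x.2) := by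
    rintro ⟨⟨a, d⟩, c⟩
    simp only [hF, mem_sigma, Nat.mem_divisorsAntidiagonal, mem_filter, mem_range]
    constructor
    · rintro ⟨⟨h1, -⟩, h2, h3⟩; exact ⟨h1, h2, h3⟩
    · rintro ⟨h1, h2, h3⟩; exact ⟨⟨h1, by omega⟩, h2, h3⟩
  have hpos : ∀ x : Σ _ : ℕ × ℕ, ℕ, x ∈ F → 0 < x.1.1 ∧ 0 < x.1.2 := by
    intro x hx
    have h1 := ((hmemF x).1 hx).1
    constructor
    · rcases Nat.eq_zero_or_pos x.1.1 with h | h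
      · rw [h, zero_mul] at h1; omega
      · exact h
    · rcases Nat.eq_zero_or_pos x.1.2 with h | h
      · rw [h, mul_zero] at h1; omega
      · exact h
  classical
  have hset : {Λ : AddSubgroup (ℤ × ℤ) | Λ.index = m ∧ Q Λ} = ↑(F.image G) := by
    ext Λ
    simp only [Set.mem_setOf_eq, coe_image, Set.mem_image, mem_coe]
    constructor
    · rintro ⟨hidx, hQΛ⟩
      obtain ⟨a, c, d, ha, hd, hc1, hc2, rfl⟩ := exists_lat Λ (by omega)
      rw [index_lat a c d (ne_of_gt hd)] at hidx
      set A := a.toNat; set C := c.toNat; set D := d.toNat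
      have hA : (A : ℤ) = a := Int.toNat_of_nonneg (le_of_lt ha)
      have hC : (C : ℤ) = c := Int.toNat_of_nonneg hc1
      have hD : (D : ℤ) = d := Int.toNat_of_nonneg (le_of_lt hd)
      have hAD : A * D = m := by
        have : (a * d).natAbs = A * D := by
          rw [Int.natAbs_mul]; congr 1 <;> omega
        omega
      have hCA : C < A := by omega
      have hDpos : 0 < D := by omega
      have hGx : G ⟨(A, D), C⟩ = lat a c d := by
        show lat (A : ℤ) (C : ℤ) (D : ℤ) = lat a c d
        rw [hA, hC, hD]
      refine ⟨⟨(A, D), C⟩, ?_, hGx⟩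
      rw [hmemF]
      refine ⟨hAD, hCA, ?_⟩
      rw [← hQ A C D hAD hCA hDpos]
      show Q (lat (A : ℤ) (C : ℤ) (D : ℤ))
      rw [hA, hC, hD]
      exact hQΛ
    · rintro ⟨x, hx, rfl⟩
      obtain ⟨h1, h2, h3⟩ := (hmemF x).1 hx
      obtain ⟨hA, hD⟩ := hpos x hx
      constructor
      · rw [hG, index_lat _ _ _ (by exact_mod_cast ne_of_gt hD)]
        rw [← Nat.cast_mul, Int.natAbs_natCast]
        exact h1
      · exact (hQ x.1.1 x.2 x.1.2 h1 h2 hD).2 h3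
  rw [hset, Set.ncard_coe_finset]
  apply Finset.card_image_of_injOn
  intro x hx y hy hxy
  obtain ⟨hxA, hxD⟩ := hpos x hx
  obtain ⟨hyA, hyD⟩ := hpos y hy
  have hx2 := ((hmemF x).1 hx).2.1
  have hy2 := ((hmemF y).1 hy).2.1
  have := lat_inj (a := (x.1.1 : ℤ)) (c := (x.2 : ℤ)) (d := (x.1.2 : ℤ))
    (by exact_mod_cast hxA) (by exact_mod_cast hxD) (by positivity) (by exact_mod_cast hx2)
    (by exact_mod_cast hyA) (by exact_mod_cast hyD) (by positivity) (by exact_mod_cast hy2)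
    hxy
  obtain ⟨e1, e2, e3⟩ := this
  obtain ⟨⟨a, d⟩, c⟩ := x
  obtain ⟨⟨a', d'⟩, c'⟩ := y
  simp only at e1 e2 e3 ⊢
  have : a = a' := by exact_mod_cast e1
  have : c = c' := by exact_mod_cast e2
  have : d = d' := by exact_mod_cast e3
  subst_vars
  rfl

lemma card_even_filter (n : ℕ) : ((range n).filter (fun c => 2 ∣ c)).card = (n + 1) / 2 := by
  have e : (range n).filter (fun c => 2 ∣ c) = (range ((n + 1) / 2)).image (fun j => 2 * j) := by
    ext c
    simp only [mem_filter, mem_range, mem_image]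
    constructor
    · rintro ⟨h1, k, rfl⟩; exact ⟨k, by omega, by omega⟩
    · rintro ⟨j, hj, rfl⟩; exact ⟨by omega, j, rfl⟩
  rw [e, card_image_of_injective _ (fun x y h => by omega), card_range]

lemma card_odd_filter (n : ℕ) : ((range n).filter (fun c => ¬ 2 ∣ c)).card = n / 2 := by
  have := Finset.card_filter_add_card_filter_not (s := range n)
    (p := fun c => 2 ∣ c)
  rw [card_even_filter, card_range] at this
  omega


lemma sumS1 (m : ℕ) :
    ∑ p ∈ m.divisorsAntidiagonal, (if 2 ∣ p.2 then (p.1 : ℤ) else 0)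
      = if 2 ∣ m then ∑ a ∈ (m / 2).divisors, (a : ℤ) else 0 := by
  by_cases h2 : 2 ∣ m
  · obtain ⟨k, rfl⟩ := h2
    rw [if_pos ⟨k, rfl⟩, ← Nat.sum_divisorsAntidiagonal (fun a _ => (a : ℤ)),
      ← Finset.sum_filter]
    have hk : 2 * k / 2 = k := by omega
    rw [hk]
    refine Finset.sum_nbij' (i := fun p => (p.1, p.2 / 2)) (j := fun q => (q.1, 2 * q.2))
      ?_ ?_ ?_ ?_ ?_
    · rintro ⟨a, d⟩ h
      rw [mem_filter, Nat.mem_divisorsAntidiagonal] at h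
      obtain ⟨⟨h1, h0⟩, e, rfl⟩ := h
      rw [Nat.mem_divisorsAntidiagonal]
      have : 2 * (a * e) = 2 * k := by rw [← h1]; ring
      have h3 : a * e = k := by omega
      have h5 : 2 * e / 2 = e := by omega
      simp only [h5]
      exact ⟨h3, by omega⟩
    · rintro ⟨a, d⟩ h
      rw [Nat.mem_divisorsAntidiagonal] at h
      rw [mem_filter, Nat.mem_divisorsAntidiagonal]
      have h1 : a * (2 * d) = 2 * k := by rw [← h.1]; ring
      exact ⟨⟨h1, by omega⟩, ⟨d, rfl⟩⟩
    · rintro ⟨a, d⟩ h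
      rw [mem_filter, Nat.mem_divisorsAntidiagonal] at h
      have : 2 * (d / 2) = d := by omega
      simp [this]
    · rintro ⟨a, d⟩ h
      simp [Nat.mul_div_cancel_left d (by norm_num : 0 < 2)]
    · rintro ⟨a, d⟩ h
      rfl
  · rw [if_neg h2]
    apply Finset.sum_eq_zero
    rintro ⟨a, d⟩ h
    rw [Nat.mem_divisorsAntidiagonal] at h
    simp only
    rw [if_neg]
    rintro ⟨e, rfl⟩
    exact h2 ⟨a * e, by rw [← h.1]; ring⟩

lemma sumS3 (m : ℕ) :
    ∑ p ∈ m.divisorsAntidiagonal, (if 2 ∣ p.1 then ((p.1 / 2 : ℕ) : ℤ) else 0)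
      = if 2 ∣ m then ∑ a ∈ (m / 2).divisors, (a : ℤ) else 0 := by
  by_cases h2 : 2 ∣ m
  · obtain ⟨k, rfl⟩ := h2
    rw [if_pos ⟨k, rfl⟩, ← Nat.sum_divisorsAntidiagonal (fun a _ => (a : ℤ)),
      ← Finset.sum_filter]
    have hk : 2 * k / 2 = k := by omega
    rw [hk]
    refine Finset.sum_nbij' (i := fun p => (p.1 / 2, p.2)) (j := fun q => (2 * q.1, q.2))
      ?_ ?_ ?_ ?_ ?_
    · rintro ⟨a, d⟩ h
      rw [mem_filter, Nat.mem_divisorsAntidiagonal] at h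
      obtain ⟨⟨h1, h0⟩, e, rfl⟩ := h
      rw [Nat.mem_divisorsAntidiagonal]
      have h3 : 2 * (e * d) = 2 * k := by rw [← h1]; ring
      have h4 : e * d = k := by omega
      have h5 : 2 * e / 2 = e := by omega
      simp only [h5]
      exact ⟨h4, by omega⟩
    · rintro ⟨a, d⟩ h
      rw [Nat.mem_divisorsAntidiagonal] at h
      rw [mem_filter, Nat.mem_divisorsAntidiagonal]
      have h1 : 2 * a * d = 2 * k := by rw [← h.1]; ring
      exact ⟨⟨h1, by omega⟩, ⟨a, rfl⟩⟩
    · rintro ⟨a, d⟩ h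
      rw [mem_filter, Nat.mem_divisorsAntidiagonal] at h
      have : 2 * (a / 2) = a := by omega
      simp [this]
    · rintro ⟨a, d⟩ h
      simp [Nat.mul_div_cancel_left a (by norm_num : 0 < 2)]
    · rintro ⟨a, d⟩ h
      rfl
  · rw [if_neg h2]
    apply Finset.sum_eq_zero
    rintro ⟨a, d⟩ h
    rw [Nat.mem_divisorsAntidiagonal] at h
    simp only
    rw [if_neg]
    rintro ⟨e, rfl⟩
    exact h2 ⟨e * d, by rw [← h.1]; ring⟩

lemma sumS2 (m : ℕ) :
    ∑ p ∈ m.divisorsAntidiagonal, (if 2 ∣ p.1 ∧ 2 ∣ p.2 then ((p.1 / 2 : ℕ) : ℤ) else 0)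
      = if 4 ∣ m then ∑ a ∈ (m / 4).divisors, (a : ℤ) else 0 := by
  by_cases h4 : 4 ∣ m
  · obtain ⟨k, rfl⟩ := h4
    rw [if_pos ⟨k, rfl⟩, ← Nat.sum_divisorsAntidiagonal (fun a _ => (a : ℤ)),
      ← Finset.sum_filter]
    have hk : 4 * k / 4 = k := by omega
    rw [hk]
    refine Finset.sum_nbij' (i := fun p => (p.1 / 2, p.2 / 2)) (j := fun q => (2 * q.1, 2 * q.2))
      ?_ ?_ ?_ ?_ ?_
    · rintro ⟨a, d⟩ h
      rw [mem_filter, Nat.mem_divisorsAntidiagonal] at h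
      obtain ⟨⟨h1, h0⟩, ⟨e, rfl⟩, ⟨f, rfl⟩⟩ := h
      rw [Nat.mem_divisorsAntidiagonal]
      have h3 : 4 * (e * f) = 4 * k := by rw [← h1]; ring
      have h4' : e * f = k := by omega
      have h5 : 2 * e / 2 = e := by omega
      have h6 : 2 * f / 2 = f := by omega
      simp only [h5, h6]
      exact ⟨h4', by omega⟩
    · rintro ⟨a, d⟩ h
      rw [Nat.mem_divisorsAntidiagonal] at h
      rw [mem_filter, Nat.mem_divisorsAntidiagonal]
      have h1 : 2 * a * (2 * d) = 4 * k := by rw [← h.1]; ring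
      exact ⟨⟨h1, by omega⟩, ⟨a, rfl⟩, ⟨d, rfl⟩⟩
    · rintro ⟨a, d⟩ h
      rw [mem_filter, Nat.mem_divisorsAntidiagonal] at h
      have e1 : 2 * (a / 2) = a := by omega
      have e2 : 2 * (d / 2) = d := by omega
      simp [e1, e2]
    · rintro ⟨a, d⟩ h
      simp [Nat.mul_div_cancel_left a (by norm_num : 0 < 2),
        Nat.mul_div_cancel_left d (by norm_num : 0 < 2)]
    · rintro ⟨a, d⟩ h
      rfl
  · rw [if_neg h4]
    apply Finset.sum_eq_zero
    rintro ⟨a, d⟩ h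
    rw [Nat.mem_divisorsAntidiagonal] at h
    simp only
    rw [if_neg]
    rintro ⟨⟨e, rfl⟩, ⟨f, rfl⟩⟩
    exact h4 ⟨e * f, by rw [← h.1]; ring⟩

lemma mem_Lambda1 {p : ℤ × ℤ} : p ∈ Lambda1 ↔ 2 ∣ p.2 := Iff.rfl
lemma mem_Lambda2 {p : ℤ × ℤ} : p ∈ Lambda2 ↔ 2 ∣ p.1 := Iff.rfl
lemma mem_Lambda3 {p : ℤ × ℤ} : p ∈ Lambda3 ↔ p.1 ≡ p.2 [ZMOD 2] := Iff.rfl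

lemma fib0 (a d : ℕ) :
    (((range a).filter (fun c => 2 ∣ d ∧ ¬(2 ∣ a ∧ 2 ∣ c))).card : ℤ)
      = (if 2 ∣ d then (a : ℤ) else 0)
        - (if 2 ∣ a ∧ 2 ∣ d then ((a / 2 : ℕ) : ℤ) else 0) := by
  by_cases hd : 2 ∣ d
  · by_cases ha : 2 ∣ a
    · have e : (range a).filter (fun c => 2 ∣ d ∧ ¬(2 ∣ a ∧ 2 ∣ c))
          = (range a).filter (fun c => ¬ 2 ∣ c) := by
        apply filter_congr; intro c _; simp [hd, ha]
      rw [e, card_odd_filter, if_pos hd, if_pos ⟨ha, hd⟩]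
      omega
    · have e : (range a).filter (fun c => 2 ∣ d ∧ ¬(2 ∣ a ∧ 2 ∣ c))
          = range a := by
        rw [filter_eq_self]; intro c _; simp [hd, ha]
      rw [e, card_range, if_pos hd, if_neg (by tauto)]
      omega
  · have e : (range a).filter (fun c => 2 ∣ d ∧ ¬(2 ∣ a ∧ 2 ∣ c)) = ∅ := by
      rw [filter_eq_empty_iff]; intro c _; simp [hd]
    rw [e, if_neg hd, if_neg (by tauto)]
    simp

lemma fib1 (a d : ℕ) :
    (((range a).filter (fun c => (2 ∣ a ∧ 2 ∣ c) ∧ ¬ 2 ∣ d)).card : ℤ)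
      = (if 2 ∣ a then ((a / 2 : ℕ) : ℤ) else 0)
        - (if 2 ∣ a ∧ 2 ∣ d then ((a / 2 : ℕ) : ℤ) else 0) := by
  by_cases ha : 2 ∣ a
  · by_cases hd : 2 ∣ d
    · have e : (range a).filter (fun c => (2 ∣ a ∧ 2 ∣ c) ∧ ¬ 2 ∣ d) = ∅ := by
        rw [filter_eq_empty_iff]; intro c _; simp [hd]
      rw [e, if_pos ha, if_pos ⟨ha, hd⟩]
      simp
    · have e : (range a).filter (fun c => (2 ∣ a ∧ 2 ∣ c) ∧ ¬ 2 ∣ d)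
          = (range a).filter (fun c => 2 ∣ c) := by
        apply filter_congr; intro c _; simp [hd, ha]
      rw [e, card_even_filter, if_pos ha, if_neg (by tauto)]
      omega
  · have e : (range a).filter (fun c => (2 ∣ a ∧ 2 ∣ c) ∧ ¬ 2 ∣ d) = ∅ := by
      rw [filter_eq_empty_iff]; intro c _; simp [ha]
    rw [e, if_neg ha, if_neg (by tauto)]
    simp

lemma fib2 (a d : ℕ) :
    (((range a).filter (fun c => 2 ∣ a ∧ ¬ 2 ∣ c ∧ ¬ 2 ∣ d)).card : ℤ)
      = (if 2 ∣ a then ((a / 2 : ℕ) : ℤ) else 0)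
        - (if 2 ∣ a ∧ 2 ∣ d then ((a / 2 : ℕ) : ℤ) else 0) := by
  by_cases ha : 2 ∣ a
  · by_cases hd : 2 ∣ d
    · have e : (range a).filter (fun c => 2 ∣ a ∧ ¬ 2 ∣ c ∧ ¬ 2 ∣ d) = ∅ := by
        rw [filter_eq_empty_iff]; intro c _; simp [hd]
      rw [e, if_pos ha, if_pos ⟨ha, hd⟩]
      simp
    · have e : (range a).filter (fun c => 2 ∣ a ∧ ¬ 2 ∣ c ∧ ¬ 2 ∣ d)
          = (range a).filter (fun c => ¬ 2 ∣ c) := by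
        apply filter_congr; intro c _; simp [hd, ha]
      rw [e, card_odd_filter, if_pos ha, if_neg (by tauto)]
      omega
  · have e : (range a).filter (fun c => 2 ∣ a ∧ ¬ 2 ∣ c ∧ ¬ 2 ∣ d) = ∅ := by
      rw [filter_eq_empty_iff]; intro c _; simp [ha]
    rw [e, if_neg ha, if_neg (by tauto)]
    simp

/-- For every positive integer `m` and every `i ∈ {1,2,3}`, the
number of index-`m` subgroups of `ℤ × ℤ` contained in `Λᵢ` but in neither `Λⱼ`
with `j ≠ i` equals `σ(m/2) − σ(m/4)` (with the convention `σ(m/k) = 0`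
when `k ∤ m`). -/

theorem stmt10 (m : ℕ) (hm : 0 < m) (i : Fin 3) :
    (Set.ncard {Λ : AddSubgroup (ℤ × ℤ) | Λ.index = m ∧ Λ ≤ L i ∧
        ∀ j : Fin 3, j ≠ i → ¬ Λ ≤ L j} : ℤ)
      = (if 2 ∣ m then ∑ a ∈ (m / 2).divisors, (a : ℤ) else 0)
        - (if 4 ∣ m then ∑ a ∈ (m / 4).divisors, (a : ℤ) else 0) := by
  fin_cases i
  · -- i = 0 : Λ₁
    have hset : {Λ : AddSubgroup (ℤ × ℤ) | Λ.index = m ∧ Λ ≤ L 0 ∧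
          ∀ j : Fin 3, j ≠ 0 → ¬ Λ ≤ L j}
        = {Λ : AddSubgroup (ℤ × ℤ) | Λ.index = m ∧
            (Λ ≤ Lambda1 ∧ ¬ Λ ≤ Lambda2 ∧ ¬ Λ ≤ Lambda3)} := by
      ext Λ
      simp only [Set.mem_setOf_eq]
      constructor
      · rintro ⟨h1, h2, h3⟩
        exact ⟨h1, h2, h3 1 (by decide), h3 2 (by decide)⟩
      · rintro ⟨h1, h2, h3, h4⟩
        refine ⟨h1, h2, ?_⟩
        intro j hj
        fin_cases j
        · exact absurd rfl hj
        · exact h3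
        · exact h4
    have hQ : ∀ a c d : ℕ, a * d = m → c < a → 0 < d →
        ((lat a c d ≤ Lambda1 ∧ ¬ lat a c d ≤ Lambda2 ∧ ¬ lat a c d ≤ Lambda3) ↔
          ((fun (ad : ℕ × ℕ) c => 2 ∣ ad.2 ∧ ¬(2 ∣ ad.1 ∧ 2 ∣ c)) (a, d) c)) := by
      intro a c d had hca hd
      have hdz : (d : ℤ) ≠ 0 := by exact_mod_cast hd.ne'
      rw [lat_le_iff hdz, lat_le_iff hdz, lat_le_iff hdz]
      simp only [mem_Lambda1, mem_Lambda2, mem_Lambda3, Int.modEq_iff_dvd]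
      omega
    show (Set.ncard {Λ : AddSubgroup (ℤ × ℤ) | Λ.index = m ∧ Λ ≤ L 0 ∧
        ∀ j : Fin 3, j ≠ 0 → ¬ Λ ≤ L j} : ℤ) = _
    rw [hset, master m hm _ (fun (ad : ℕ × ℕ) c => 2 ∣ ad.2 ∧ ¬(2 ∣ ad.1 ∧ 2 ∣ c)) hQ,
      Finset.card_sigma]
    push_cast
    rw [Finset.sum_congr rfl (fun ad _ => fib0 ad.1 ad.2), Finset.sum_sub_distrib,
      sumS1, sumS2]
  · -- i = 1 : Λ₂
    have hset : {Λ : AddSubgroup (ℤ × ℤ) | Λ.index = m ∧ Λ ≤ L 1 ∧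
          ∀ j : Fin 3, j ≠ 1 → ¬ Λ ≤ L j}
        = {Λ : AddSubgroup (ℤ × ℤ) | Λ.index = m ∧
            (Λ ≤ Lambda2 ∧ ¬ Λ ≤ Lambda1 ∧ ¬ Λ ≤ Lambda3)} := by
      ext Λ
      simp only [Set.mem_setOf_eq]
      constructor
      · rintro ⟨h1, h2, h3⟩
        exact ⟨h1, h2, h3 0 (by decide), h3 2 (by decide)⟩
      · rintro ⟨h1, h2, h3, h4⟩
        refine ⟨h1, h2, ?_⟩
        intro j hj
        fin_cases j
        · exact h3
        · exact absurd rfl hj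
        · exact h4
    have hQ : ∀ a c d : ℕ, a * d = m → c < a → 0 < d →
        ((lat a c d ≤ Lambda2 ∧ ¬ lat a c d ≤ Lambda1 ∧ ¬ lat a c d ≤ Lambda3) ↔
          ((fun (ad : ℕ × ℕ) c => (2 ∣ ad.1 ∧ 2 ∣ c) ∧ ¬ 2 ∣ ad.2) (a, d) c)) := by
      intro a c d had hca hd
      have hdz : (d : ℤ) ≠ 0 := by exact_mod_cast hd.ne'
      rw [lat_le_iff hdz, lat_le_iff hdz, lat_le_iff hdz]
      simp only [mem_Lambda1, mem_Lambda2, mem_Lambda3, Int.modEq_iff_dvd]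
      omega
    show (Set.ncard {Λ : AddSubgroup (ℤ × ℤ) | Λ.index = m ∧ Λ ≤ L 1 ∧
        ∀ j : Fin 3, j ≠ 1 → ¬ Λ ≤ L j} : ℤ) = _
    rw [hset, master m hm _ (fun (ad : ℕ × ℕ) c => (2 ∣ ad.1 ∧ 2 ∣ c) ∧ ¬ 2 ∣ ad.2) hQ,
      Finset.card_sigma]
    push_cast
    rw [Finset.sum_congr rfl (fun ad _ => fib1 ad.1 ad.2), Finset.sum_sub_distrib,
      sumS3, sumS2]
  · -- i = 2 : Λ₃
    have hset : {Λ : AddSubgroup (ℤ × ℤ) | Λ.index = m ∧ Λ ≤ L 2 ∧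
          ∀ j : Fin 3, j ≠ 2 → ¬ Λ ≤ L j}
        = {Λ : AddSubgroup (ℤ × ℤ) | Λ.index = m ∧
            (Λ ≤ Lambda3 ∧ ¬ Λ ≤ Lambda1 ∧ ¬ Λ ≤ Lambda2)} := by
      ext Λ
      simp only [Set.mem_setOf_eq]
      constructor
      · rintro ⟨h1, h2, h3⟩
        exact ⟨h1, h2, h3 0 (by decide), h3 1 (by decide)⟩
      · rintro ⟨h1, h2, h3, h4⟩
        refine ⟨h1, h2, ?_⟩
        intro j hj
        fin_cases j
        · exact h3
        · exact h4
        · exact absurd rfl hj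
    have hQ : ∀ a c d : ℕ, a * d = m → c < a → 0 < d →
        ((lat a c d ≤ Lambda3 ∧ ¬ lat a c d ≤ Lambda1 ∧ ¬ lat a c d ≤ Lambda2) ↔
          ((fun (ad : ℕ × ℕ) c => 2 ∣ ad.1 ∧ ¬ 2 ∣ c ∧ ¬ 2 ∣ ad.2) (a, d) c)) := by
      intro a c d had hca hd
      have hdz : (d : ℤ) ≠ 0 := by exact_mod_cast hd.ne'
      rw [lat_le_iff hdz, lat_le_iff hdz, lat_le_iff hdz]
      simp only [mem_Lambda1, mem_Lambda2, mem_Lambda3, Int.modEq_iff_dvd]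
      omega
    show (Set.ncard {Λ : AddSubgroup (ℤ × ℤ) | Λ.index = m ∧ Λ ≤ L 2 ∧
        ∀ j : Fin 3, j ≠ 2 → ¬ Λ ≤ L j} : ℤ) = _
    rw [hset, master m hm _ (fun (ad : ℕ × ℕ) c => 2 ∣ ad.1 ∧ ¬ 2 ∣ c ∧ ¬ 2 ∣ ad.2) hQ,
      Finset.card_sigma]
    push_cast
    rw [Finset.sum_congr rfl (fun ad _ => fib2 ad.1 ad.2), Finset.sum_sub_distrib,
      sumS3, sumS2]
end

section
/- Let m be a positive integer and let ε₁, ε₂, ε₃ ∈ {+1, −1}. Then the sum, over all index-m subgroups Λ of ℤ × ℤ, of the product Π_{i : Λ ⊆ Λᵢ} εᵢ (an empty product being 1) equals σ(m) + (ε₁+ε₂+ε₃ − 3)·σ(m/2) + (ε₁ε₂ε₃ − (ε₁+ε₂+ε₃) + 2)·σ(m/4), where σ(m/2) = 0 if m is odd and σ(m/4) = 0 if 4 does not divide m. -/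
/-- The homomorphism `(s,t) ↦ (s·a + t·b, t·d)`. -/
def phiH (a b d : ℕ) : (ℤ × ℤ) →+ (ℤ × ℤ) where
  toFun p := (p.1 * a + p.2 * b, p.2 * d)
  map_zero' := by simp
  map_add' p q := by
    ext <;> simp <;> ring

/-- The sublattice with Hermite normal form `[[a, b], [0, d]]`. -/
def Hsub (a b d : ℕ) : AddSubgroup (ℤ × ℤ) := (phiH a b d).range

lemma mem_Hsub {a b d : ℕ} {p : ℤ × ℤ} :
    p ∈ Hsub a b d ↔ ∃ s t : ℤ, p.1 = s * a + t * b ∧ p.2 = t * d := by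
  constructor
  · rintro ⟨⟨s, t⟩, rfl⟩
    exact ⟨s, t, rfl, rfl⟩
  · rintro ⟨s, t, h1, h2⟩
    exact ⟨(s, t), by ext <;> simp [phiH, h1.symm, h2.symm]⟩

lemma aa_mem_Hsub (a b d : ℕ) : ((a : ℤ), (0 : ℤ)) ∈ Hsub a b d :=
  mem_Hsub.mpr ⟨1, 0, by ring, by ring⟩

lemma bd_mem_Hsub (a b d : ℕ) : ((b : ℤ), (d : ℤ)) ∈ Hsub a b d :=
  mem_Hsub.mpr ⟨0, 1, by ring, by ring⟩

/-- The homomorphism `(x, y) ↦ x - b·y mod a`. -/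
def chiA (a b : ℕ) : (ℤ × ℤ) →+ ZMod a where
  toFun p := ((p.1 - b * p.2 : ℤ) : ZMod a)
  map_zero' := by simp
  map_add' p q := by
    simp only [Prod.fst_add, Prod.snd_add]
    push_cast
    ring

/-- The homomorphism `(x, y) ↦ y mod d`. -/
def chiD (d : ℕ) : (ℤ × ℤ) →+ ZMod d where
  toFun p := ((p.2 : ℤ) : ZMod d)
  map_zero' := by simp
  map_add' p q := by
    simp only [Prod.snd_add]
    push_cast
    ring

/-- The homomorphism `(x, y) ↦ (x, d·y)`. -/
def psiD (d : ℕ) : (ℤ × ℤ) →+ (ℤ × ℤ) where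
  toFun p := (p.1, p.2 * d)
  map_zero' := by simp
  map_add' p q := by ext <;> simp <;> ring

lemma index_ker_eq_card {G M : Type*} [AddGroup G] [AddCommGroup M]
    (f : G →+ M) (hf : Function.Surjective f) :
    f.ker.index = Nat.card M := by
  rw [AddSubgroup.index]
  exact Nat.card_congr (QuotientAddGroup.quotientKerEquivOfSurjective f hf).toEquiv

lemma Hsub_one_eq_ker (a b : ℕ) : Hsub a b 1 = (chiA a b).ker := by
  ext ⟨x, y⟩
  simp only [mem_Hsub, AddMonoidHom.mem_ker, chiA, AddMonoidHom.coe_mk, ZeroHom.coe_mk]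
  rw [ZMod.intCast_zmod_eq_zero_iff_dvd]
  constructor
  · rintro ⟨s, t, h1, h2⟩
    have ht : t = y := by simpa using h2.symm
    subst ht
    exact ⟨s, by rw [h1]; ring⟩
  · rintro ⟨s, hs⟩
    exact ⟨s, y, by linarith, by ring⟩

lemma range_psiD_eq_ker (d : ℕ) : (psiD d).range = (chiD d).ker := by
  ext ⟨x, y⟩
  simp only [AddMonoidHom.mem_range, AddMonoidHom.mem_ker, chiD, psiD,
    AddMonoidHom.coe_mk, ZeroHom.coe_mk, Prod.mk.injEq, Prod.exists]
  rw [ZMod.intCast_zmod_eq_zero_iff_dvd]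
  constructor
  · rintro ⟨s, t, _, rfl⟩
    exact ⟨t, by ring⟩
  · rintro ⟨t, rfl⟩
    exact ⟨x, t, rfl, by ring⟩

lemma psiD_injective {d : ℕ} (hd : 0 < d) : Function.Injective (psiD d) := by
  intro p q h
  simp only [psiD, AddMonoidHom.coe_mk, ZeroHom.coe_mk, Prod.mk.injEq] at h
  ext
  · exact h.1
  · have := h.2
    have hd' : (d : ℤ) ≠ 0 := by positivity
    exact mul_right_cancel₀ hd' this

lemma map_Hsub_one (a b d : ℕ) : (Hsub a b 1).map (psiD d) = Hsub a b d := by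
  ext ⟨x, y⟩
  simp only [AddSubgroup.mem_map]
  constructor
  · rintro ⟨⟨u, v⟩, hu, hv⟩
    obtain ⟨s, t, h1, h2⟩ := mem_Hsub.mp hu
    simp only [psiD, AddMonoidHom.coe_mk, ZeroHom.coe_mk, Prod.mk.injEq] at hv
    obtain ⟨rfl, rfl⟩ := hv
    have ht : v = t := by simpa using h2
    exact mem_Hsub.mpr ⟨s, t, by simpa using h1, by rw [ht]⟩
  · rintro h
    obtain ⟨s, t, h1, h2⟩ := mem_Hsub.mp h
    refine ⟨(x, t), mem_Hsub.mpr ⟨s, t, h1, by ring⟩, ?_⟩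
    simp [psiD, h2.symm]

lemma index_Hsub {a d : ℕ} (b : ℕ) (ha : 0 < a) (hd : 0 < d) :
    (Hsub a b d).index = a * d := by
  have hchiA : Function.Surjective (chiA a b) := by
    intro z
    obtain ⟨x, rfl⟩ := ZMod.intCast_surjective z
    exact ⟨(x, 0), by simp [chiA]⟩
  have hchiD : Function.Surjective (chiD d) := by
    intro z
    obtain ⟨y, rfl⟩ := ZMod.intCast_surjective z
    exact ⟨(0, y), by simp [chiD]⟩
  have h1 : (Hsub a b 1).index = a := by
    rw [Hsub_one_eq_ker, index_ker_eq_card _ hchiA, Nat.card_zmod]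
  have h2 : (psiD d).range.index = d := by
    rw [range_psiD_eq_ker, index_ker_eq_card _ hchiD, Nat.card_zmod]
  have hker : (psiD d).ker = ⊥ := by
    rw [AddMonoidHom.ker_eq_bot_iff]
    exact psiD_injective hd
  rw [← map_Hsub_one a b d, AddSubgroup.index_map, hker, sup_bot_eq, h1, h2]

lemma classify (Λ : AddSubgroup (ℤ × ℤ)) (h : Λ.index ≠ 0) :
    ∃ a b d : ℕ, 0 < a ∧ 0 < d ∧ b < a ∧ Λ = Hsub a b d := by
  haveI : Λ.FiniteIndex := ⟨h⟩
  set P := Λ.map (AddMonoidHom.snd ℤ ℤ) with hPdef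
  set A := Λ.comap (AddMonoidHom.inl ℤ ℤ) with hAdef
  obtain ⟨g, hgP⟩ := Int.subgroup_cyclic P
  obtain ⟨a₀, haA⟩ := Int.subgroup_cyclic A
  have hA : ∀ x : ℤ, ((x, (0:ℤ)) : ℤ × ℤ) ∈ Λ ↔ a₀ ∣ x := by
    intro x
    have : ((x, (0:ℤ)) : ℤ × ℤ) ∈ Λ ↔ x ∈ A := by
      rw [hAdef, AddSubgroup.mem_comap, AddMonoidHom.inl_apply]
    rw [this, haA, AddSubgroup.mem_closure_singleton]
    constructor
    · rintro ⟨n, rfl⟩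
      exact ⟨n, by rw [zsmul_eq_mul, Int.cast_id]; ring⟩
    · rintro ⟨n, rfl⟩
      exact ⟨n, by rw [zsmul_eq_mul, Int.cast_id]; ring⟩
  have hP : ∀ y : ℤ, y ∈ P ↔ g ∣ y := by
    intro y
    rw [hgP, AddSubgroup.mem_closure_singleton]
    constructor
    · rintro ⟨n, rfl⟩
      exact ⟨n, by rw [zsmul_eq_mul, Int.cast_id]; ring⟩
    · rintro ⟨n, rfl⟩
      exact ⟨n, by rw [zsmul_eq_mul, Int.cast_id]; ring⟩
  have hsnd : ∀ p : ℤ × ℤ, p ∈ Λ → p.2 ∈ P := by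
    intro p hp
    exact ⟨p, hp, rfl⟩
  have ha₀ : a₀ ≠ 0 := by
    intro ha0
    have hinj : Function.Injective (fun n : ℤ => ((n, (0:ℤ)) : (ℤ × ℤ) ⧸ Λ)) := by
      intro n n' hnn
      have := (QuotientAddGroup.eq (s := Λ)).mp hnn
      have h2 : ((-n + n', (0:ℤ)) : ℤ × ℤ) ∈ Λ := by simpa using this
      have h3 := (hA _).mp h2
      rw [ha0, zero_dvd_iff] at h3
      omega
    haveI := Finite.of_injective _ hinj
    exact not_finite ℤ
  have hg : g ≠ 0 := by
    intro hg0
    have hinj : Function.Injective (fun n : ℤ => (((0:ℤ), n) : (ℤ × ℤ) ⧸ Λ)) := by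
      intro n n' hnn
      have := (QuotientAddGroup.eq (s := Λ)).mp hnn
      have h2 : (((0:ℤ), -n + n') : ℤ × ℤ) ∈ Λ := by simpa using this
      have h3 := (hP _).mp (hsnd _ h2)
      rw [hg0, zero_dvd_iff] at h3
      omega
    haveI := Finite.of_injective _ hinj
    exact not_finite ℤ
  set a : ℕ := a₀.natAbs with hadef
  set d : ℕ := g.natAbs with hddef
  have hapos : 0 < a := Int.natAbs_pos.mpr ha₀
  have hdpos : 0 < d := Int.natAbs_pos.mpr hg
  have hA' : ∀ x : ℤ, ((x, (0:ℤ)) : ℤ × ℤ) ∈ Λ ↔ (a : ℤ) ∣ x := by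
    intro x; rw [hA x, hadef]; exact (Int.natAbs_dvd).symm
  have hdP : (d : ℤ) ∈ P := by
    rw [hP]
    exact Int.dvd_natAbs.mpr dvd_rfl
  obtain ⟨p₀, hp₀Λ, hp₀2⟩ := hdP
  set b₀ : ℤ := p₀.1 with hb₀def
  have hb₀Λ : ((b₀, (d:ℤ)) : ℤ × ℤ) ∈ Λ := by
    have : p₀ = (b₀, (d:ℤ)) := by
      ext
      · rfl
      · exact hp₀2
    rwa [this] at hp₀Λ
  have ha0' : (0:ℤ) < (a:ℤ) := by exact_mod_cast hapos
  set b : ℕ := (b₀ % (a:ℤ)).toNat with hbdef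
  have hbeq : (b : ℤ) = b₀ % (a:ℤ) := Int.toNat_of_nonneg (Int.emod_nonneg _ (by omega))
  have hblt : b < a := by
    have := Int.emod_lt_of_pos b₀ ha0'
    omega
  have habb : (a:ℤ) ∣ b₀ - b := by
    rw [hbeq]
    exact Int.dvd_self_sub_of_emod_eq rfl
  have haΛ : (((a:ℤ), (0:ℤ)) : ℤ × ℤ) ∈ Λ := (hA' _).mpr dvd_rfl
  have hbΛ : (((b:ℤ), (d:ℤ)) : ℤ × ℤ) ∈ Λ := by
    have h2 : (((b:ℤ) - b₀, (0:ℤ)) : ℤ × ℤ) ∈ Λ := (hA' _).mpr (dvd_sub_comm.mp habb)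
    have h3 := Λ.add_mem hb₀Λ h2
    have he : ((b₀, (d:ℤ)) : ℤ × ℤ) + (((b:ℤ) - b₀, (0:ℤ)) : ℤ × ℤ) = (((b:ℤ), (d:ℤ)) : ℤ × ℤ) := by
      simp [Prod.ext_iff]
    rwa [he] at h3
  refine ⟨a, b, d, hapos, hdpos, hblt, ?_⟩
  ext ⟨x, y⟩
  rw [mem_Hsub]
  constructor
  · intro hxy
    have hy : g ∣ y := (hP y).mp (hsnd _ hxy)
    have hdy : (d:ℤ) ∣ y := (Int.natAbs_dvd).mpr hy
    obtain ⟨t, rfl⟩ := hdy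
    have h2 : ((x - t * b, (0:ℤ)) : ℤ × ℤ) ∈ Λ := by
      have := Λ.sub_mem hxy (Λ.zsmul_mem hbΛ t)
      convert this using 2 <;> · simp [smul_eq_mul]; try ring
    obtain ⟨s, hs⟩ := (hA' _).mp h2
    exact ⟨s, t, by linarith, by ring⟩
  · rintro ⟨s, t, hx, hy⟩
    have : ((x, y) : ℤ × ℤ) = s • (((a:ℤ), (0:ℤ)) : ℤ × ℤ) + t • (((b:ℤ), (d:ℤ)) : ℤ × ℤ) := by
      ext
      · simp [smul_eq_mul]; linarith
      · simp [smul_eq_mul]; linarith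
    rw [this]
    exact Λ.add_mem (Λ.zsmul_mem haΛ s) (Λ.zsmul_mem hbΛ t)

lemma Hsub_le_aux {a b d a' b' d' : ℕ} (h : Hsub a b d ≤ Hsub a' b' d') (hd' : 0 < d') :
    (d' ∣ d) ∧ (a' ∣ a) := by
  constructor
  · obtain ⟨s, t, h1, h2⟩ := mem_Hsub.mp (h (bd_mem_Hsub a b d))
    dsimp only at h1 h2
    have : (d' : ℤ) ∣ (d : ℤ) := ⟨t, by linarith⟩
    exact_mod_cast this
  · obtain ⟨s, t, h1, h2⟩ := mem_Hsub.mp (h (aa_mem_Hsub a b d))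
    dsimp only at h1 h2
    have ht : t = 0 := by
      have hd'0 : (d' : ℤ) ≠ 0 := by positivity
      have : t * (d' : ℤ) = 0 := by linarith
      exact (mul_eq_zero.mp this).resolve_right hd'0
    subst ht
    have : (a' : ℤ) ∣ (a : ℤ) := ⟨s, by linarith⟩
    exact_mod_cast this

lemma Hsub_inj {a b d a' b' d' : ℕ} (ha : 0 < a) (hd : 0 < d) (ha' : 0 < a') (hd' : 0 < d')
    (hb : b < a) (hb' : b' < a') (h : Hsub a b d = Hsub a' b' d') :
    a = a' ∧ b = b' ∧ d = d' := by
  obtain ⟨hdd, haa⟩ := Hsub_le_aux h.le hd'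
  obtain ⟨hdd', haa'⟩ := Hsub_le_aux h.ge hd
  have hd2 : d = d' := Nat.dvd_antisymm hdd' hdd
  have ha2 : a = a' := Nat.dvd_antisymm haa' haa
  subst hd2; subst ha2
  refine ⟨rfl, ?_, rfl⟩
  obtain ⟨s, t, h1, h2⟩ := mem_Hsub.mp (h ▸ bd_mem_Hsub a b d)
  dsimp only at h1 h2
  have ht : t = 1 := by
    have hd0 : (d : ℤ) ≠ 0 := by positivity
    have : (t - 1) * (d : ℤ) = 0 := by linarith
    have := (mul_eq_zero.mp this).resolve_right hd0
    omega
  subst ht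
  have hdvd : (a : ℤ) ∣ (b : ℤ) - (b' : ℤ) := ⟨s, by linarith⟩
  have := Int.eq_zero_of_abs_lt_dvd hdvd (by
    rw [abs_lt]
    constructor <;> push_cast <;> omega)
  omega


open scoped Classical

lemma Hsub_le_L1 (a b d : ℕ) : Hsub a b d ≤ Lambda1 ↔ 2 ∣ d := by
  constructor
  · intro h
    have := h (bd_mem_Hsub a b d)
    have h2 : (2:ℤ) ∣ (d:ℤ) := this
    exact_mod_cast h2
  · intro hd p hp
    obtain ⟨s, t, h1, h2⟩ := mem_Hsub.mp hp
    show (2:ℤ) ∣ p.2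
    rw [h2]
    obtain ⟨k, rfl⟩ := hd
    push_cast
    ring_nf
    exact ⟨t * k, by ring⟩

lemma Hsub_le_L2 (a b d : ℕ) : Hsub a b d ≤ Lambda2 ↔ 2 ∣ a ∧ 2 ∣ b := by
  constructor
  · intro h
    have h1 : (2:ℤ) ∣ (a:ℤ) := h (aa_mem_Hsub a b d)
    have h2 : (2:ℤ) ∣ (b:ℤ) := h (bd_mem_Hsub a b d)
    exact ⟨by exact_mod_cast h1, by exact_mod_cast h2⟩
  · rintro ⟨⟨j, rfl⟩, ⟨k, rfl⟩⟩ p hp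
    obtain ⟨s, t, h1, h2⟩ := mem_Hsub.mp hp
    show (2:ℤ) ∣ p.1
    rw [h1]
    push_cast
    exact ⟨s * j + t * k, by ring⟩

lemma Hsub_le_L3 (a b d : ℕ) : Hsub a b d ≤ Lambda3 ↔ 2 ∣ a ∧ 2 ∣ (b + d) := by
  constructor
  · intro h
    have h1 : (a:ℤ) ≡ 0 [ZMOD 2] := h (aa_mem_Hsub a b d)
    have h2 : (b:ℤ) ≡ (d:ℤ) [ZMOD 2] := h (bd_mem_Hsub a b d)
    have h1' : (2:ℤ) ∣ (a:ℤ) := Int.modEq_zero_iff_dvd.mp h1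
    have h2' : (2:ℤ) ∣ (d:ℤ) - (b:ℤ) := Int.ModEq.dvd h2
    constructor
    · exact_mod_cast h1'
    · have : (2:ℤ) ∣ ((b:ℤ) + (d:ℤ)) := by
        obtain ⟨k, hk⟩ := h2'
        exact ⟨k + b, by linarith⟩
      exact_mod_cast this
  · rintro ⟨ha, hbd⟩ p hp
    obtain ⟨s, t, h1, h2⟩ := mem_Hsub.mp hp
    show p.1 ≡ p.2 [ZMOD 2]
    rw [Int.ModEq]
    rw [h1, h2]
    obtain ⟨j, hj⟩ := ha
    have hd2 : d % 2 = b % 2 := by omega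
    have : (2:ℤ) ∣ (s * a + t * b) - t * d := by
      have hdb : (2:ℤ) ∣ (b:ℤ) - (d:ℤ) := by
        have : (2:ℕ) ∣ (b + d) := hbd
        have h3 : (2:ℤ) ∣ ((b:ℤ) + d) := by exact_mod_cast this
        obtain ⟨k, hk⟩ := h3
        exact ⟨k - d, by linarith⟩
      obtain ⟨k, hk⟩ := hdb
      refine ⟨s * j + t * k, ?_⟩
      have hja : (a:ℤ) = 2 * j := by exact_mod_cast hj
      have htk : t * (b:ℤ) - t * d = 2 * (t * k) := by rw [← mul_sub, hk]; ring
      rw [hja]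
      linarith
    omega

lemma sum_range_parity (u v : ℤ) (a : ℕ) :
    ∑ b ∈ Finset.range a, (if 2 ∣ b then u else v)
      = (((a + 1) / 2 : ℕ) : ℤ) * u + ((a / 2 : ℕ) : ℤ) * v := by
  induction a with
  | zero => simp
  | succ n ih =>
    rw [Finset.sum_range_succ, ih]
    by_cases h : 2 ∣ n
    · rw [if_pos h]
      obtain ⟨k, rfl⟩ := h
      have e1 : (2 * k + 1) / 2 = k := by omega
      have e2 : 2 * k / 2 = k := by omega
      have e3 : (2 * k + 1 + 1) / 2 = k + 1 := by omega
      rw [e1, e2, e3]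
      push_cast
      ring
    · rw [if_neg h]
      obtain ⟨k, rfl⟩ : ∃ k, n = 2 * k + 1 := ⟨n / 2, by omega⟩
      have e1 : (2 * k + 1 + 1) / 2 = k + 1 := by omega
      have e2 : (2 * k + 1) / 2 = k := by omega
      have e3 : (2 * k + 1 + 1 + 1) / 2 = k + 1 := by omega
      rw [e1, e2, e3]
      push_cast
      ring

lemma split_fst (m : ℕ) (F : ℕ → ℕ → ℤ) :
    ∑ p ∈ m.divisorsAntidiagonal, (if 2 ∣ p.1 then F (p.1 / 2) p.2 else 0)
      = if 2 ∣ m then ∑ p ∈ (m / 2).divisorsAntidiagonal, F p.1 p.2 else 0 := by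
  by_cases hm : 2 ∣ m
  · rw [if_pos hm, ← Finset.sum_filter]
    refine Finset.sum_nbij' (fun p => (p.1 / 2, p.2)) (fun p => (2 * p.1, p.2)) ?_ ?_ ?_ ?_ ?_
    · rintro ⟨x, y⟩ hp
      rw [Finset.mem_filter, Nat.mem_divisorsAntidiagonal] at hp
      obtain ⟨⟨hxy, hm0⟩, k, rfl⟩ := hp
      rw [Nat.mem_divisorsAntidiagonal]
      have h2 : m / 2 = k * y := by rw [← hxy, mul_assoc, Nat.mul_div_cancel_left _ (by norm_num)]
      dsimp only at hxy ⊢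
      exact ⟨by rw [Nat.mul_div_cancel_left _ (by norm_num)]; omega, by omega⟩
    · rintro ⟨x, y⟩ hp
      rw [Nat.mem_divisorsAntidiagonal] at hp
      obtain ⟨hxy, hm0⟩ := hp
      rw [Finset.mem_filter, Nat.mem_divisorsAntidiagonal]
      refine ⟨⟨?_, by omega⟩, ⟨x, rfl⟩⟩
      have : 2 * (m / 2) = m := by omega
      rw [← this, ← hxy]
      ring
    · rintro ⟨x, y⟩ hp
      rw [Finset.mem_filter] at hp
      obtain ⟨-, k, rfl⟩ := hp
      simp [Nat.mul_div_cancel_left _ (show 0 < 2 by norm_num)]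
    · rintro ⟨x, y⟩ hp
      simp [Nat.mul_div_cancel_left _ (show 0 < 2 by norm_num)]
    · rintro ⟨x, y⟩ hp
      rfl
  · rw [if_neg hm]
    apply Finset.sum_eq_zero
    intro p hp
    rw [Nat.mem_divisorsAntidiagonal] at hp
    rw [if_neg]
    intro h2
    exact hm (h2.trans ⟨p.2, hp.1.symm⟩)

lemma split_snd (m : ℕ) (F : ℕ → ℕ → ℤ) :
    ∑ p ∈ m.divisorsAntidiagonal, (if 2 ∣ p.2 then F p.1 (p.2 / 2) else 0)
      = if 2 ∣ m then ∑ p ∈ (m / 2).divisorsAntidiagonal, F p.1 p.2 else 0 := by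
  by_cases hm : 2 ∣ m
  · rw [if_pos hm, ← Finset.sum_filter]
    refine Finset.sum_nbij' (fun p => (p.1, p.2 / 2)) (fun p => (p.1, 2 * p.2)) ?_ ?_ ?_ ?_ ?_
    · rintro ⟨x, y⟩ hp
      rw [Finset.mem_filter, Nat.mem_divisorsAntidiagonal] at hp
      obtain ⟨⟨hxy, hm0⟩, k, rfl⟩ := hp
      rw [Nat.mem_divisorsAntidiagonal]
      have h2 : m / 2 = x * k := by
        rw [← hxy]
        have : x * (2 * k) = 2 * (x * k) := by ring
        rw [this, Nat.mul_div_cancel_left _ (by norm_num)]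
      dsimp only at hxy ⊢
      exact ⟨by rw [Nat.mul_div_cancel_left _ (by norm_num)]; omega, by omega⟩
    · rintro ⟨x, y⟩ hp
      rw [Nat.mem_divisorsAntidiagonal] at hp
      obtain ⟨hxy, hm0⟩ := hp
      rw [Finset.mem_filter, Nat.mem_divisorsAntidiagonal]
      refine ⟨⟨?_, by omega⟩, ⟨y, rfl⟩⟩
      have : 2 * (m / 2) = m := by omega
      rw [← this, ← hxy]
      ring
    · rintro ⟨x, y⟩ hp
      rw [Finset.mem_filter] at hp
      obtain ⟨-, k, rfl⟩ := hp
      simp [Nat.mul_div_cancel_left _ (show 0 < 2 by norm_num)]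
    · rintro ⟨x, y⟩ hp
      simp [Nat.mul_div_cancel_left _ (show 0 < 2 by norm_num)]
    · rintro ⟨x, y⟩ hp
      rfl
  · rw [if_neg hm]
    apply Finset.sum_eq_zero
    intro p hp
    rw [Nat.mem_divisorsAntidiagonal] at hp
    rw [if_neg]
    intro h2
    exact hm (h2.trans ⟨p.1, by rw [← hp.1]; ring⟩)

lemma point_sum (ε : Fin 3 → ℤ) (a d : ℕ) :
    ∑ b ∈ Finset.range a,
        ((if 2 ∣ d then ε 0 else 1) * (if 2 ∣ a ∧ 2 ∣ b then ε 1 else 1)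
          * (if 2 ∣ a ∧ 2 ∣ (b + d) then ε 2 else 1))
      = if 2 ∣ a then
          ((a / 2 : ℕ) : ℤ) * (if 2 ∣ d then ε 0 * ε 1 * ε 2 + ε 0 else ε 1 + ε 2)
        else (a : ℤ) * (if 2 ∣ d then ε 0 else 1) := by
  by_cases ha : 2 ∣ a
  · by_cases hd : 2 ∣ d
    · have heq : ∀ b ∈ Finset.range a,
          ((if 2 ∣ d then ε 0 else 1) * (if 2 ∣ a ∧ 2 ∣ b then ε 1 else 1)
            * (if 2 ∣ a ∧ 2 ∣ (b + d) then ε 2 else 1))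
          = if 2 ∣ b then ε 0 * ε 1 * ε 2 else ε 0 := by
        intro b _
        by_cases hb : 2 ∣ b
        · rw [if_pos hd, if_pos ⟨ha, hb⟩,
            if_pos (show 2 ∣ a ∧ 2 ∣ (b + d) from ⟨ha, by omega⟩), if_pos hb]
        · rw [if_pos hd, if_neg (show ¬(2 ∣ a ∧ 2 ∣ b) from fun h => hb h.2),
            if_neg (show ¬(2 ∣ a ∧ 2 ∣ (b + d)) from fun h => by omega), if_neg hb]
          ring
      rw [Finset.sum_congr rfl heq, sum_range_parity, if_pos ha, if_pos hd]
      have h1 : (a + 1) / 2 = a / 2 := by omega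
      rw [h1]
      ring
    · have heq : ∀ b ∈ Finset.range a,
          ((if 2 ∣ d then ε 0 else 1) * (if 2 ∣ a ∧ 2 ∣ b then ε 1 else 1)
            * (if 2 ∣ a ∧ 2 ∣ (b + d) then ε 2 else 1))
          = if 2 ∣ b then ε 1 else ε 2 := by
        intro b _
        by_cases hb : 2 ∣ b
        · rw [if_neg hd, if_pos ⟨ha, hb⟩,
            if_neg (show ¬(2 ∣ a ∧ 2 ∣ (b + d)) from fun h => by omega), if_pos hb]
          ring
        · rw [if_neg hd, if_neg (show ¬(2 ∣ a ∧ 2 ∣ b) from fun h => hb h.2),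
            if_pos (show 2 ∣ a ∧ 2 ∣ (b + d) from ⟨ha, by omega⟩), if_neg hb]
          ring
      rw [Finset.sum_congr rfl heq, sum_range_parity, if_pos ha, if_neg hd]
      have h1 : (a + 1) / 2 = a / 2 := by omega
      rw [h1]
      ring
  · have heq : ∀ b ∈ Finset.range a,
        ((if 2 ∣ d then ε 0 else 1) * (if 2 ∣ a ∧ 2 ∣ b then ε 1 else 1)
          * (if 2 ∣ a ∧ 2 ∣ (b + d) then ε 2 else 1))
        = if 2 ∣ d then ε 0 else 1 := by
      intro b _
      rw [if_neg (show ¬(2 ∣ a ∧ 2 ∣ b) from fun h => ha h.1),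
        if_neg (show ¬(2 ∣ a ∧ 2 ∣ (b + d)) from fun h => ha h.1)]
      ring
    rw [Finset.sum_congr rfl heq, Finset.sum_const, Finset.card_range, nsmul_eq_mul,
      if_neg ha]

lemma outer_sum (ε : Fin 3 → ℤ) (m : ℕ) :
    ∑ p ∈ m.divisorsAntidiagonal,
        (if 2 ∣ p.1 then
          ((p.1 / 2 : ℕ) : ℤ) * (if 2 ∣ p.2 then ε 0 * ε 1 * ε 2 + ε 0 else ε 1 + ε 2)
        else (p.1 : ℤ) * (if 2 ∣ p.2 then ε 0 else 1))
      = (∑ a ∈ m.divisors, (a : ℤ))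
        + (ε 0 + ε 1 + ε 2 - 3)
            * (if 2 ∣ m then ∑ a ∈ (m / 2).divisors, (a : ℤ) else 0)
        + (ε 0 * ε 1 * ε 2 - (ε 0 + ε 1 + ε 2) + 2)
            * (if 4 ∣ m then ∑ a ∈ (m / 4).divisors, (a : ℤ) else 0) := by
  have key : ∀ n : ℕ, ∑ p ∈ n.divisorsAntidiagonal, (p.1 : ℤ) = ∑ a ∈ n.divisors, (a : ℤ) :=
    fun n => Nat.sum_divisorsAntidiagonal (fun a _ => (a : ℤ))
  have step1 : ∀ p ∈ m.divisorsAntidiagonal,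
      (if 2 ∣ p.1 then
          ((p.1 / 2 : ℕ) : ℤ) * (if 2 ∣ p.2 then ε 0 * ε 1 * ε 2 + ε 0 else ε 1 + ε 2)
        else (p.1 : ℤ) * (if 2 ∣ p.2 then ε 0 else 1))
      = ((p.1 : ℤ) + (if 2 ∣ p.2 then (p.1 : ℤ) * (ε 0 - 1) else 0))
        + (if 2 ∣ p.1 then
            ((p.1 / 2 : ℕ) : ℤ) * ((if 2 ∣ p.2 then ε 0 * ε 1 * ε 2 + ε 0 else ε 1 + ε 2)
              - 2 * (if 2 ∣ p.2 then ε 0 else 1)) else 0) := by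
    rintro ⟨x, y⟩ -
    dsimp only
    by_cases hx : 2 ∣ x
    · obtain ⟨q, rfl⟩ := hx
      have hq2 : (2 : ℕ) ∣ 2 * q := ⟨q, rfl⟩
      have hq : 2 * q / 2 = q := by omega
      simp only [if_pos hq2, hq]
      by_cases hy : 2 ∣ y
      · simp only [if_pos hy]
        push_cast
        ring
      · simp only [if_neg hy]
        push_cast
        ring
    · simp only [if_neg hx]
      by_cases hy : 2 ∣ y
      · simp only [if_pos hy]
        ring
      · simp only [if_neg hy]
        ring
  rw [Finset.sum_congr rfl step1]
  rw [Finset.sum_add_distrib, Finset.sum_add_distrib, key]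
  have hS2 : ∑ p ∈ m.divisorsAntidiagonal, (if 2 ∣ p.2 then (p.1 : ℤ) * (ε 0 - 1) else 0)
      = if 2 ∣ m then (∑ a ∈ (m / 2).divisors, (a : ℤ)) * (ε 0 - 1) else 0 := by
    have h := split_snd m (fun a _ => (a : ℤ) * (ε 0 - 1))
    rw [h]
    by_cases hm : 2 ∣ m
    · rw [if_pos hm, if_pos hm, ← key, Finset.sum_mul]
    · rw [if_neg hm, if_neg hm]
  have hS3 : ∑ p ∈ m.divisorsAntidiagonal,
      (if 2 ∣ p.1 then
          ((p.1 / 2 : ℕ) : ℤ) * ((if 2 ∣ p.2 then ε 0 * ε 1 * ε 2 + ε 0 else ε 1 + ε 2)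
            - 2 * (if 2 ∣ p.2 then ε 0 else 1)) else 0)
      = if 2 ∣ m then
          ((∑ a ∈ (m / 2).divisors, (a : ℤ)) * (ε 1 + ε 2 - 2)
            + (if 2 ∣ (m / 2) then
                (∑ a ∈ (m / 4).divisors, (a : ℤ))
                  * (ε 0 * ε 1 * ε 2 - (ε 0 + ε 1 + ε 2) + 2) else 0))
        else 0 := by
    have h := split_fst m (fun a d => (a : ℤ) * ((if 2 ∣ d then ε 0 * ε 1 * ε 2 + ε 0 else ε 1 + ε 2)
      - 2 * (if 2 ∣ d then ε 0 else 1)))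
    rw [h]
    by_cases hm : 2 ∣ m
    · rw [if_pos hm, if_pos hm]
      set n := m / 2 with hn
      have inner : ∀ p ∈ n.divisorsAntidiagonal,
          (p.1 : ℤ) * ((if 2 ∣ p.2 then ε 0 * ε 1 * ε 2 + ε 0 else ε 1 + ε 2)
            - 2 * (if 2 ∣ p.2 then ε 0 else 1))
          = (p.1 : ℤ) * (ε 1 + ε 2 - 2)
            + (if 2 ∣ p.2 then
                (p.1 : ℤ) * (ε 0 * ε 1 * ε 2 - (ε 0 + ε 1 + ε 2) + 2) else 0) := by
        rintro ⟨x, y⟩ -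
        dsimp only
        by_cases hy : 2 ∣ y
        · simp only [if_pos hy]; ring
        · simp only [if_neg hy]; ring
      rw [Finset.sum_congr rfl inner, Finset.sum_add_distrib]
      have h2 := split_snd n (fun a _ => (a : ℤ) * (ε 0 * ε 1 * ε 2 - (ε 0 + ε 1 + ε 2) + 2))
      rw [h2]
      have hnn : n / 2 = m / 4 := by omega
      rw [hnn]
      congr 1
      · rw [← key, Finset.sum_mul]
      · by_cases hn2 : 2 ∣ n
        · rw [if_pos hn2, if_pos hn2, ← key, Finset.sum_mul]
        · rw [if_neg hn2, if_neg hn2]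
    · rw [if_neg hm, if_neg hm]
  rw [hS2, hS3]
  by_cases hm : 2 ∣ m
  · rw [if_pos hm, if_pos hm, if_pos hm]
    by_cases hm4 : 4 ∣ m
    · have h2 : 2 ∣ m / 2 := by omega
      rw [if_pos h2, if_pos hm4]
      ring
    · have h2 : ¬ 2 ∣ m / 2 := by omega
      rw [if_neg h2, if_neg hm4]
      ring
  · have hm4 : ¬ 4 ∣ m := by omega
    rw [if_neg hm, if_neg hm, if_neg hm, if_neg hm4]
    ring

/-- For signs `ε₁, ε₂, ε₃ ∈ {±1}`, the sum over all index-`m`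
subgroups `Λ ≤ ℤ × ℤ` of `Π_{i : Λ ⊆ Λᵢ} εᵢ` equals
`σ(m) + (ε₁+ε₂+ε₃−3)σ(m/2) + (ε₁ε₂ε₃−(ε₁+ε₂+ε₃)+2)σ(m/4)`
(with the convention `σ(m/k) = 0` when `k ∤ m`). -/
theorem stmt12 (m : ℕ) (hm : 0 < m) (ε : Fin 3 → ℤ)
    (hε : ∀ i, ε i = 1 ∨ ε i = -1) :
    (∑ᶠ Λ ∈ {Λ : AddSubgroup (ℤ × ℤ) | Λ.index = m},
        ∏ i : Fin 3, if Λ ≤ L i then ε i else 1)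
      = (∑ a ∈ m.divisors, (a : ℤ))
        + (ε 0 + ε 1 + ε 2 - 3)
            * (if 2 ∣ m then ∑ a ∈ (m / 2).divisors, (a : ℤ) else 0)
        + (ε 0 * ε 1 * ε 2 - (ε 0 + ε 1 + ε 2) + 2)
            * (if 4 ∣ m then ∑ a ∈ (m / 4).divisors, (a : ℤ) else 0) := by
  classical
  set F : (Σ _ : ℕ × ℕ, ℕ) → AddSubgroup (ℤ × ℤ) := fun q => Hsub q.1.1 q.2 q.1.2 with hF
  set T : Finset (Σ _ : ℕ × ℕ, ℕ) :=
    m.divisorsAntidiagonal.sigma (fun p => Finset.range p.1) with hT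
  have hmemT : ∀ q : (Σ _ : ℕ × ℕ, ℕ), q ∈ T →
      q.1.1 * q.1.2 = m ∧ q.2 < q.1.1 ∧ 0 < q.1.1 ∧ 0 < q.1.2 := by
    rintro ⟨⟨a, d⟩, b⟩ hq
    rw [hT, Finset.mem_sigma, Nat.mem_divisorsAntidiagonal, Finset.mem_range] at hq
    obtain ⟨⟨had, hm0⟩, hb⟩ := hq
    refine ⟨had, hb, ?_, ?_⟩
    · rcases Nat.eq_zero_or_pos a with h | h
      · subst h; simp at had; omega
      · exact h
    · rcases Nat.eq_zero_or_pos d with h | h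
      · subst h; simp at had; omega
      · exact h
  have hset : {Λ : AddSubgroup (ℤ × ℤ) | Λ.index = m} = ↑(T.image F) := by
    ext Λ
    simp only [Set.mem_setOf_eq, Finset.coe_image, Set.mem_image, Finset.mem_coe]
    constructor
    · intro hΛ
      obtain ⟨a, b, d, ha, hd, hb, rfl⟩ := classify Λ (by omega)
      rw [index_Hsub b ha hd] at hΛ
      refine ⟨⟨(a, d), b⟩, ?_, rfl⟩
      rw [hT, Finset.mem_sigma, Nat.mem_divisorsAntidiagonal, Finset.mem_range]
      exact ⟨⟨hΛ, by omega⟩, hb⟩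
    · rintro ⟨q, hq, rfl⟩
      obtain ⟨had, hb, ha, hd⟩ := hmemT q hq
      show (Hsub q.1.1 q.2 q.1.2).index = m
      rw [index_Hsub q.2 ha hd, had]
  have hinjT : ∀ x ∈ T, ∀ y ∈ T, F x = F y → x = y := by
    rintro ⟨⟨a, d⟩, b⟩ hx ⟨⟨a', d'⟩, b'⟩ hy hFeq
    obtain ⟨-, hb, ha, hd⟩ := hmemT _ hx
    obtain ⟨-, hb', ha', hd'⟩ := hmemT _ hy
    obtain ⟨h1, h2, h3⟩ := Hsub_inj ha hd ha' hd' hb hb' hFeq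
    subst h1; subst h2; subst h3
    rfl
  rw [hset, finsum_mem_coe_finset, Finset.sum_image hinjT, hT, Finset.sum_sigma]
  have hprod : ∀ p ∈ m.divisorsAntidiagonal, ∀ b ∈ Finset.range p.1,
      (∏ i : Fin 3, if F ⟨p, b⟩ ≤ L i then ε i else 1)
      = ((if 2 ∣ p.2 then ε 0 else 1) * (if 2 ∣ p.1 ∧ 2 ∣ b then ε 1 else 1)
          * (if 2 ∣ p.1 ∧ 2 ∣ (b + p.2) then ε 2 else 1)) := by
    rintro ⟨a, d⟩ - b -
    rw [Fin.prod_univ_three]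
    have hL0 : L 0 = Lambda1 := rfl
    have hL1 : L 1 = Lambda2 := rfl
    have hL2 : L 2 = Lambda3 := rfl
    rw [hL0, hL1, hL2]
    show ((if Hsub a b d ≤ Lambda1 then ε 0 else 1) * (if Hsub a b d ≤ Lambda2 then ε 1 else 1)
        * (if Hsub a b d ≤ Lambda3 then ε 2 else 1)) = _
    simp only [Hsub_le_L1, Hsub_le_L2, Hsub_le_L3]
  calc ∑ p ∈ m.divisorsAntidiagonal, ∑ b ∈ Finset.range p.1,
        (∏ i : Fin 3, if F ⟨p, b⟩ ≤ L i then ε i else 1)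
      = ∑ p ∈ m.divisorsAntidiagonal, ∑ b ∈ Finset.range p.1,
        ((if 2 ∣ p.2 then ε 0 else 1) * (if 2 ∣ p.1 ∧ 2 ∣ b then ε 1 else 1)
          * (if 2 ∣ p.1 ∧ 2 ∣ (b + p.2) then ε 2 else 1)) := by
        exact Finset.sum_congr rfl (fun p hp => Finset.sum_congr rfl (hprod p hp))
    _ = ∑ p ∈ m.divisorsAntidiagonal,
        (if 2 ∣ p.1 then
          ((p.1 / 2 : ℕ) : ℤ) * (if 2 ∣ p.2 then ε 0 * ε 1 * ε 2 + ε 0 else ε 1 + ε 2)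
        else (p.1 : ℤ) * (if 2 ∣ p.2 then ε 0 else 1)) := by
        exact Finset.sum_congr rfl (fun p _ => point_sum ε p.1 p.2)
    _ = _ := outer_sum ε m
end
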